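/- Theorem 3 (finite-horizon supremum form): For a non-controllable FSC and 0 ≤ u ≤ v, the supremum of the finite-horizon information objective over v-th order conditional Markov sources is attained within the subclass of sources whose policies depend on the output history only through the a posteriori vector: sup_{P ∈ 𝒫_v(u,u)} Σ_{t=1}^N I^P(X_{t-v}^t, S_{t-v-1}; Y_t | Y^{t-1}) = sup_{P ∈ 𝒫'_v(u,u)} Σ_{t=1}^N I^P(X_{t-v}^t, S_{t-v-1}; Y_t | Y^{t-1}), where I^P denotes conditional mutual information under the joint law induced by the source P (windows truncated for small t). -/

import Mathlib

/-!
Common framework: finite-state channels (FSCs), non-controllable FSCs,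
sources with delayed feedback (FB) and delayed state information (SI),
induced joint pmfs, conditional probabilities and conditional mutual
information, following Huang–Kavčić–Ma, "Upper Bounds on the Capacities of
Non-Controllable Finite-State Channels with/without Feedback".

Time convention: for a horizon `N`, the channel inputs are `X_1,…,X_N`
(coordinate `x i` of `x : Fin N → X` is `X_{i+1}`), the states are
`S_0,…,S_N` (coordinate `s j` of `s : Fin (N+1) → S` is `S_j`), and the
outputs are `Y_1,…,Y_N` (coordinate `y i` is `Y_{i+1}`).
-/

open Finset

noncomputable section

namespace FSCPaper

/-- Probability of an event under a pmf `p` on a finite sample space. -/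
def prE {Ω : Type} [Fintype Ω] (p : Ω → ℝ) (E : Set Ω) : ℝ :=
  ∑ ω : Ω, E.indicator p ω

/-- Conditional probability `Pr(E | F)`, a ratio of (sums of) marginals
(with the `0/0 = 0` junk-value convention of real division). -/
def condPr {Ω : Type} [Fintype Ω] (p : Ω → ℝ) (E F : Set Ω) : ℝ :=
  prE p (E ∩ F) / prE p F

/-- The conditional pmf `Pr(· | F)` given an event `F`. -/
def condPMF {Ω : Type} [Fintype Ω] (p : Ω → ℝ) (F : Set Ω) : Ω → ℝ :=
  fun ω => F.indicator p ω / prE p F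

/-- Conditional mutual information `I(A;B|C)` of finite-valued random
variables `fA, fB, fC` under the pmf `p`; zero-probability terms
contribute `0` (the factor in front of the logarithm vanishes). -/
def condMI {Ω A B C : Type} [Fintype Ω] [Fintype A] [Fintype B] [Fintype C]
    (p : Ω → ℝ) (fA : Ω → A) (fB : Ω → B) (fC : Ω → C) : ℝ :=
  ∑ a : A, ∑ b : B, ∑ c : C,
    prE p {ω | fA ω = a ∧ fB ω = b ∧ fC ω = c} *
      Real.log (condPr p {ω | fA ω = a ∧ fB ω = b} {ω | fC ω = c} /
        (condPr p {ω | fA ω = a} {ω | fC ω = c} *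
          condPr p {ω | fB ω = b} {ω | fC ω = c}))

/-- Trajectories `(x_1^N, s_0^N, y_1^N)`. -/
abbrev Traj (X S Y : Type) (N : ℕ) : Type :=
  (Fin N → X) × (Fin (N + 1) → S) × (Fin N → Y)

/-- A general finite-state channel: channel transition kernel
`W(y, s' | x, s)` (a pmf on `Y × S` for each `(x,s)`) and initial state
pmf `init`. -/
structure FSC (X S Y : Type) [Fintype S] [Fintype Y] : Type where
  W : Y → S → X → S → ℝ
  init : S → ℝ
  W_nonneg : ∀ y s' x s, 0 ≤ W y s' x s
  W_sum : ∀ x s, (∑ y : Y, ∑ s' : S, W y s' x s) = 1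
  init_nonneg : ∀ s, 0 ≤ init s
  init_sum : (∑ s : S, init s) = 1

/-- A source without feedback: conditional pmfs `π_t(x_t | x^{t-1})`;
`pol t x a` is the probability that `X_{t+1} = a` given that the previous
inputs are the corresponding coordinates of `x` (by `causal` it depends
only on the coordinates `x j` with `j < t`). -/
structure FFSource (X : Type) [Fintype X] (N : ℕ) : Type where
  pol : Fin N → (Fin N → X) → X → ℝ
  nonneg : ∀ t x a, 0 ≤ pol t x a
  sum_one : ∀ t x, (∑ a : X, pol t x a) = 1
  causal : ∀ (t : Fin N) (x x' : Fin N → X),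
    (∀ j : Fin N, (j : ℕ) < (t : ℕ) → x j = x' j) → pol t x = pol t x'

/-- A non-controllable finite-state channel: output kernel `P(y|x,s)`,
free state-transition kernel `Q(s'|s)`, and initial state pmf `init`. -/
structure NCFSC (X S Y : Type) [Fintype S] [Fintype Y] : Type where
  P : Y → X → S → ℝ
  Q : S → S → ℝ
  init : S → ℝ
  P_nonneg : ∀ y x s, 0 ≤ P y x s
  P_sum : ∀ x s, (∑ y : Y, P y x s) = 1
  Q_nonneg : ∀ s' s, 0 ≤ Q s' s
  Q_sum : ∀ s, (∑ s' : S, Q s' s) = 1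
  init_nonneg : ∀ s, 0 ≤ init s
  init_sum : (∑ s : S, init s) = 1

/-- A source with `u`-delayed feedback and `u`-delayed state information
(the set `𝒫(u,u)`): `pol t x s y a` is
`π_{t+1}(a | x^{t}, s_0^{t-u}, y^{t-u})` in 1-based time; by `causal` it
depends on `(x, s, y)` only through the coordinates
`x_1^{t}` (indices `j < t`), `s_0^{t-u}` (indices `j + u ≤ t`) and
`y_1^{t-u}` (indices `j + u + 1 ≤ t`), i.e. on the past inputs, the
`u`-delayed state information and the `u`-delayed output feedback. -/
structure Source (X S Y : Type) [Fintype X] [Fintype S] [Fintype Y] (N u : ℕ) : Type where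
  pol : Fin N → (Fin N → X) → (Fin (N + 1) → S) → (Fin N → Y) → X → ℝ
  nonneg : ∀ t x s y a, 0 ≤ pol t x s y a
  sum_one : ∀ t x s y, (∑ a : X, pol t x s y a) = 1
  causal : ∀ (t : Fin N) (x x' : Fin N → X) (s s' : Fin (N + 1) → S) (y y' : Fin N → Y),
    (∀ j : Fin N, (j : ℕ) < (t : ℕ) → x j = x' j) →
    (∀ j : Fin (N + 1), (j : ℕ) + u ≤ (t : ℕ) → s j = s' j) →
    (∀ j : Fin N, (j : ℕ) + u + 1 ≤ (t : ℕ) → y j = y' j) →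
    pol t x s y = pol t x' s' y'

variable {X S Y : Type} [Fintype X] [Fintype S] [Fintype Y]

/-- Joint pmf induced by a general FSC and a feedforward source:
`Pr(x^N, s_0^N, y^N) = μ(s_0) ∏_t π_t(x_t|x^{t-1}) W(y_t, s_t | x_t, s_{t-1})`. -/
def jointP0 {N : ℕ} (ch : FSC X S Y) (src : FFSource X N) (ω : Traj X S Y N) : ℝ :=
  ch.init (ω.2.1 0) *
    ∏ i : Fin N,
      src.pol i ω.1 (ω.1 i) *
        ch.W (ω.2.2 i) (ω.2.1 i.succ) (ω.1 i) (ω.2.1 i.castSucc)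

/-- Joint channel transition `W(y, s' | x, s) = P(y|x,s) · Q(s'|s)` of a
non-controllable FSC. -/
def NCFSC.W (ch : NCFSC X S Y) (y : Y) (s' : S) (x : X) (s : S) : ℝ :=
  ch.P y x s * ch.Q s' s

/-- Joint pmf induced by a non-controllable FSC and a source in `𝒫(u,u)`:
`Pr(x^N, s_0^N, y^N) = μ(s_0) ∏_t π_t(x_t|x^{t-1},s_0^{t-u-1},y^{t-u-1}) W(y_t,s_t|x_t,s_{t-1})`. -/
def jointP {N u : ℕ} (ch : NCFSC X S Y) (src : Source X S Y N u) (ω : Traj X S Y N) : ℝ :=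
  ch.init (ω.2.1 0) *
    ∏ i : Fin N,
      src.pol i ω.1 ω.2.1 ω.2.2 (ω.1 i) *
        ch.W (ω.2.2 i) (ω.2.1 i.succ) (ω.1 i) (ω.2.1 i.castSucc)

/-- A source in `𝒫(u,u)` is a `v`-th order conditional Markov source
(the set `𝒫_v(u,u)`) if each policy depends on its arguments only through
`(x_{t-v}^{t-1}, s_{t-v-1}^{t-u-1}, y^{t-u-1})` (windows truncated for
small `t`). -/
def IsMarkov {N u : ℕ} (v : ℕ) (src : Source X S Y N u) : Prop :=
  ∀ (t : Fin N) (x x' : Fin N → X) (s s' : Fin (N + 1) → S) (y y' : Fin N → Y),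
    (∀ j : Fin N, (t : ℕ) ≤ (j : ℕ) + v ∧ (j : ℕ) < (t : ℕ) → x j = x' j) →
    (∀ j : Fin (N + 1), (t : ℕ) ≤ (j : ℕ) + v ∧ (j : ℕ) + u ≤ (t : ℕ) → s j = s' j) →
    (∀ j : Fin N, (j : ℕ) + u + 1 ≤ (t : ℕ) → y j = y' j) →
    src.pol t x s y = src.pol t x' s' y'

/-- `Σ_{t=1}^N I(X^t, S_0^{t-v-1}; Y_t | Y^{t-1})` under the joint law of
the source (state window omitted/truncated when `t - v - 1 < 0`). -/
def objFull {N u : ℕ} (v : ℕ) (ch : NCFSC X S Y) (src : Source X S Y N u) : ℝ :=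
  ∑ t : Fin N,
    condMI (jointP ch src)
      (fun ω : Traj X S Y N =>
        ((fun j : {j : Fin N // (j : ℕ) ≤ (t : ℕ)} => ω.1 j.1),
          fun j : {j : Fin (N + 1) // (j : ℕ) + v ≤ (t : ℕ)} => ω.2.1 j.1))
      (fun ω => ω.2.2 t)
      (fun ω => fun j : {j : Fin N // (j : ℕ) < (t : ℕ)} => ω.2.2 j.1)

/-- `Σ_{t=1}^N I(X_{t-v}^t, S_{t-v-1}; Y_t | Y^{t-1})` under the joint law
of the source (windows truncated for small `t`; the singleton state window
`S_{t-v-1}` is encoded by the condition `j + v = t - 1` in 0-based time and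
is empty for `t ≤ v`). -/
def objWin {N u : ℕ} (v : ℕ) (ch : NCFSC X S Y) (src : Source X S Y N u) : ℝ :=
  ∑ t : Fin N,
    condMI (jointP ch src)
      (fun ω : Traj X S Y N =>
        ((fun j : {j : Fin N // (t : ℕ) ≤ (j : ℕ) + v ∧ (j : ℕ) ≤ (t : ℕ)} => ω.1 j.1),
          fun j : {j : Fin (N + 1) // (j : ℕ) + v = (t : ℕ)} => ω.2.1 j.1))
      (fun ω => ω.2.2 t)
      (fun ω => fun j : {j : Fin N // (j : ℕ) < (t : ℕ)} => ω.2.2 j.1)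

/-- Directed information `I(X^N → Y^N) = Σ_{t=1}^N I(X^t; Y_t | Y^{t-1})`. -/
def directedInfo {N u : ℕ} (ch : NCFSC X S Y) (src : Source X S Y N u) : ℝ :=
  ∑ t : Fin N,
    condMI (jointP ch src)
      (fun ω : Traj X S Y N => fun j : {j : Fin N // (j : ℕ) ≤ (t : ℕ)} => ω.1 j.1)
      (fun ω => ω.2.2 t)
      (fun ω => fun j : {j : Fin N // (j : ℕ) < (t : ℕ)} => ω.2.2 j.1)

/-- The a posteriori vectors `α_{t-1}(y^{t-u-1})` and `α_{t-1}(ỹ^{t-u-1})`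
(at the 1-based time `(t:ℕ)+1`) induced by the two output histories `yh`
and `yh'` coincide: for all window values `(x_{t-v}^{t-1}, s_{t-v-1}^{t-u-1})`
the two a posteriori probabilities agree. -/
def alphaWinEq {N u : ℕ} (v : ℕ) (ch : NCFSC X S Y) (src : Source X S Y N u)
    (t : Fin N) (yh yh' : Fin N → Y) : Prop :=
  ∀ (xf : Fin N → X) (sf : Fin (N + 1) → S),
    condPr (jointP ch src)
        {ω : Traj X S Y N |
          (∀ j : Fin N, (t : ℕ) ≤ (j : ℕ) + v ∧ (j : ℕ) < (t : ℕ) → ω.1 j = xf j) ∧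
            ∀ j : Fin (N + 1), (t : ℕ) ≤ (j : ℕ) + v ∧ (j : ℕ) + u ≤ (t : ℕ) → ω.2.1 j = sf j}
        {ω : Traj X S Y N | ∀ j : Fin N, (j : ℕ) + u + 1 ≤ (t : ℕ) → ω.2.2 j = yh j} =
      condPr (jointP ch src)
        {ω : Traj X S Y N |
          (∀ j : Fin N, (t : ℕ) ≤ (j : ℕ) + v ∧ (j : ℕ) < (t : ℕ) → ω.1 j = xf j) ∧
            ∀ j : Fin (N + 1), (t : ℕ) ≤ (j : ℕ) + v ∧ (j : ℕ) + u ≤ (t : ℕ) → ω.2.1 j = sf j}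
        {ω : Traj X S Y N | ∀ j : Fin N, (j : ℕ) + u + 1 ≤ (t : ℕ) → ω.2.2 j = yh' j}

/-- The set `𝒫'_v(u,u)`: the policy at each time gives the same value on
any two positive-probability output histories inducing the same a
posteriori vector. -/
def AlphaPolicy {N u : ℕ} (v : ℕ) (ch : NCFSC X S Y) (src : Source X S Y N u) : Prop :=
  ∀ (t : Fin N) (yh yh' : Fin N → Y),
    0 < prE (jointP ch src)
        {ω : Traj X S Y N | ∀ j : Fin N, (j : ℕ) + u + 1 ≤ (t : ℕ) → ω.2.2 j = yh j} →
    0 < prE (jointP ch src)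
        {ω : Traj X S Y N | ∀ j : Fin N, (j : ℕ) + u + 1 ≤ (t : ℕ) → ω.2.2 j = yh' j} →
    alphaWinEq v ch src t yh yh' →
    ∀ (xf : Fin N → X) (sf : Fin (N + 1) → S) (a : X),
      src.pol t xf sf yh a = src.pol t xf sf yh' a


/-! ### Infrastructure for the proof of Statement 15 -/

section Proof15

open Classical in
lemma prE_nonneg {Ω : Type} [Fintype Ω] {p : Ω → ℝ} (hp : ∀ ω, 0 ≤ p ω) (E : Set Ω) :
    0 ≤ prE p E := by
  refine Finset.sum_nonneg fun ω _ => ?_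
  exact Set.indicator_nonneg (fun a _ => hp a) ω

lemma prE_mono {Ω : Type} [Fintype Ω] {p : Ω → ℝ} (hp : ∀ ω, 0 ≤ p ω) {E F : Set Ω}
    (h : E ⊆ F) : prE p E ≤ prE p F := by
  refine Finset.sum_le_sum fun ω _ => ?_
  exact Set.indicator_le_indicator_of_subset h hp ω

lemma prE_congr {Ω : Type} [Fintype Ω] (p : Ω → ℝ) {E F : Set Ω} (h : ∀ ω, ω ∈ E ↔ ω ∈ F) :
    prE p E = prE p F := by
  have : E = F := Set.ext h
  rw [this]

open Classical in
lemma prE_eq_sum_ite {Ω : Type} [Fintype Ω] (p : Ω → ℝ) (E : Set Ω) :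
    prE p E = ∑ ω : Ω, if ω ∈ E then p ω else 0 := by
  unfold prE
  refine Finset.sum_congr rfl fun ω _ => ?_
  rw [Set.indicator_apply]

open Classical in
lemma prE_eq_sum_mul_ite {Ω : Type} [Fintype Ω] (p : Ω → ℝ) (E : Set Ω) :
    prE p E = ∑ ω : Ω, p ω * (if ω ∈ E then (1:ℝ) else 0) := by
  rw [prE_eq_sum_ite]
  refine Finset.sum_congr rfl fun ω _ => ?_
  by_cases h : ω ∈ E <;> simp [h]

lemma prE_partition {Ω κ : Type} [Fintype Ω] [Fintype κ] (p : Ω → ℝ) (E : Set Ω) (h : Ω → κ) :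
    prE p E = ∑ w : κ, prE p (E ∩ {ω | h ω = w}) := by
  unfold prE
  rw [Finset.sum_comm]
  refine Finset.sum_congr rfl fun ω _ => ?_
  by_cases hE : ω ∈ E
  · rw [Set.indicator_of_mem hE, Finset.sum_eq_single (h ω)]
    · rw [Set.indicator_of_mem (by exact ⟨hE, rfl⟩)]
    · intro w _ hw
      refine Set.indicator_of_notMem ?_ p
      rintro ⟨-, hc⟩
      exact hw (by simpa using hc.symm)
    · intro hmem; exact absurd (Finset.mem_univ _) hmem
  · rw [Set.indicator_of_notMem hE]
    rw [Finset.sum_eq_zero]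
    intro w _
    refine Set.indicator_of_notMem ?_ p
    rintro ⟨hc, -⟩
    exact hE hc


lemma update_sum {ι β : Type} [Fintype ι] [DecidableEq ι] [Fintype β] (F : (ι → β) → ℝ) (i : ι) :
    ∑ g : ι → β, ∑ a : β, F (Function.update g i a) = (Fintype.card β : ℝ) * ∑ g : ι → β, F g := by
  have hinv : Function.Involutive
      (fun p : (ι → β) × β => (Function.update p.1 i p.2, p.1 i)) := by
    intro p
    simp [Function.update_idem]
  have key : ∑ p : (ι → β) × β, F (Function.update p.1 i p.2) = ∑ p : (ι → β) × β, F p.1 :=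
    Fintype.sum_bijective _ hinv.bijective _ _ (fun p => rfl)
  calc ∑ g : ι → β, ∑ a : β, F (Function.update g i a)
      = ∑ p : (ι → β) × β, F (Function.update p.1 i p.2) :=
        (Fintype.sum_prod_type (fun p : (ι → β) × β => F (Function.update p.1 i p.2))).symm
    _ = ∑ p : (ι → β) × β, F p.1 := key
    _ = ∑ g : ι → β, ∑ _a : β, F g := Fintype.sum_prod_type (fun p : (ι → β) × β => F p.1)
    _ = (Fintype.card β : ℝ) * ∑ g, F g := by
        simp [Finset.sum_const, nsmul_eq_mul, Finset.mul_sum]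

variable {X S Y : Type} [Fintype X] [Fintype S] [Fintype Y]

lemma sum_traj {N : ℕ} (F : Traj X S Y N → ℝ) :
    ∑ ω : Traj X S Y N, F ω
      = ∑ x : Fin N → X, ∑ s : Fin (N+1) → S, ∑ y : Fin N → Y, F (x, s, y) := by
  rw [Fintype.sum_prod_type (fun ω : Traj X S Y N => F ω)]
  exact Finset.sum_congr rfl fun x _ =>
    Fintype.sum_prod_type (fun z : (Fin (N+1) → S) × (Fin N → Y) => F (x, z.1, z.2))

lemma sum_update_X {N : ℕ} (F : Traj X S Y N → ℝ) (i : Fin N) :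
    ∑ ω : Traj X S Y N, ∑ a : X, F (Function.update ω.1 i a, ω.2)
      = (Fintype.card X : ℝ) * ∑ ω : Traj X S Y N, F ω := by
  rw [sum_traj (fun ω => ∑ a : X, F (Function.update ω.1 i a, ω.2))]
  rw [sum_traj F]
  dsimp only
  calc ∑ x : Fin N → X, ∑ s : Fin (N+1) → S, ∑ y : Fin N → Y, ∑ a : X,
          F (Function.update x i a, s, y)
      = ∑ x : Fin N → X, ∑ a : X, ∑ s : Fin (N+1) → S, ∑ y : Fin N → Y,
          F (Function.update x i a, s, y) := by
        refine Finset.sum_congr rfl fun x _ => ?_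
        calc ∑ s : Fin (N+1) → S, ∑ y : Fin N → Y, ∑ a : X, F (Function.update x i a, s, y)
            = ∑ s : Fin (N+1) → S, ∑ a : X, ∑ y : Fin N → Y, F (Function.update x i a, s, y) :=
              Finset.sum_congr rfl fun s _ => Finset.sum_comm
          _ = ∑ a : X, ∑ s : Fin (N+1) → S, ∑ y : Fin N → Y, F (Function.update x i a, s, y) :=
              Finset.sum_comm
    _ = (Fintype.card X : ℝ) * ∑ x : Fin N → X, ∑ s : Fin (N+1) → S, ∑ y : Fin N → Y,
          F (x, s, y) :=
        update_sum (fun x => ∑ s : Fin (N+1) → S, ∑ y : Fin N → Y, F (x, s, y)) i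

lemma sum_update_S {N : ℕ} (F : Traj X S Y N → ℝ) (i : Fin (N+1)) :
    ∑ ω : Traj X S Y N, ∑ b : S, F (ω.1, Function.update ω.2.1 i b, ω.2.2)
      = (Fintype.card S : ℝ) * ∑ ω : Traj X S Y N, F ω := by
  rw [sum_traj (fun ω => ∑ b : S, F (ω.1, Function.update ω.2.1 i b, ω.2.2))]
  rw [sum_traj F]
  dsimp only
  rw [Finset.mul_sum]
  refine Finset.sum_congr rfl fun x _ => ?_
  calc ∑ s : Fin (N+1) → S, ∑ y : Fin N → Y, ∑ b : S, F (x, Function.update s i b, y)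
      = ∑ s : Fin (N+1) → S, ∑ b : S, ∑ y : Fin N → Y, F (x, Function.update s i b, y) :=
        Finset.sum_congr rfl fun s _ => Finset.sum_comm
    _ = (Fintype.card S : ℝ) * ∑ s : Fin (N+1) → S, ∑ y : Fin N → Y, F (x, s, y) :=
        update_sum (fun s => ∑ y : Fin N → Y, F (x, s, y)) i

lemma sum_update_Y {N : ℕ} (F : Traj X S Y N → ℝ) (i : Fin N) :
    ∑ ω : Traj X S Y N, ∑ c : Y, F (ω.1, ω.2.1, Function.update ω.2.2 i c)
      = (Fintype.card Y : ℝ) * ∑ ω : Traj X S Y N, F ω := by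
  rw [sum_traj (fun ω => ∑ c : Y, F (ω.1, ω.2.1, Function.update ω.2.2 i c))]
  rw [sum_traj F]
  dsimp only
  rw [Finset.mul_sum]
  refine Finset.sum_congr rfl fun x _ => ?_
  calc ∑ s : Fin (N+1) → S, ∑ y : Fin N → Y, ∑ c : Y, F (x, s, Function.update y i c)
      = ∑ s : Fin (N+1) → S, (Fintype.card Y : ℝ) * ∑ y : Fin N → Y, F (x, s, y) :=
        Finset.sum_congr rfl fun s _ => update_sum (fun y => F (x, s, y)) i
    _ = (Fintype.card Y : ℝ) * ∑ s : Fin (N+1) → S, ∑ y : Fin N → Y, F (x, s, y) := by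
        rw [Finset.mul_sum]


section Channel

lemma nonempty_S_of_ch (ch : NCFSC X S Y) : Nonempty S := by
  by_contra h
  rw [not_nonempty_iff] at h
  have := ch.init_sum
  rw [Finset.univ_eq_empty, Finset.sum_empty] at this
  exact zero_ne_one this

lemma nonempty_Y_of_ch (ch : NCFSC X S Y) (x : X) : Nonempty Y := by
  obtain ⟨s⟩ := nonempty_S_of_ch ch
  by_contra h
  rw [not_nonempty_iff] at h
  have := ch.P_sum x s
  rw [Finset.univ_eq_empty, Finset.sum_empty] at this
  exact zero_ne_one this

variable {N u : ℕ} (ch : NCFSC X S Y)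

/-- One time-step factor of the joint pmf. -/
def polW (src : Source X S Y N u) (i : Fin N) (ω : Traj X S Y N) : ℝ :=
  src.pol i ω.1 ω.2.1 ω.2.2 (ω.1 i) *
    ch.W (ω.2.2 i) (ω.2.1 i.succ) (ω.1 i) (ω.2.1 i.castSucc)

lemma jointP_eq_prod (src : Source X S Y N u) (ω : Traj X S Y N) :
    jointP ch src ω = ch.init (ω.2.1 0) * ∏ i : Fin N, polW ch src i ω := rfl

lemma polW_nonneg (src : Source X S Y N u) (i : Fin N) (ω : Traj X S Y N) :
    0 ≤ polW ch src i ω :=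
  mul_nonneg (src.nonneg _ _ _ _ _)
    (mul_nonneg (ch.P_nonneg _ _ _) (ch.Q_nonneg _ _))

lemma jointP_nonneg (src : Source X S Y N u) (ω : Traj X S Y N) :
    0 ≤ jointP ch src ω := by
  rw [jointP_eq_prod]
  exact mul_nonneg (ch.init_nonneg _)
    (Finset.prod_nonneg fun i _ => polW_nonneg ch src i ω)

/-- Truncated (partial) joint pmf: only the first `d` time steps. -/
def partialP (src : Source X S Y N u) (d : ℕ) (ω : Traj X S Y N) : ℝ :=
  ch.init (ω.2.1 0) *
    ∏ i ∈ Finset.univ.filter (fun i : Fin N => (i : ℕ) < d), polW ch src i ω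

/-- `f` depends only on the coordinates `x_j (j < T)`, `s_j (j ≤ T)`, `y_j (j < T)`. -/
def Cyl (T : ℕ) (f : Traj X S Y N → ℝ) : Prop :=
  ∀ ω ω' : Traj X S Y N,
    (∀ j : Fin N, (j : ℕ) < T → ω.1 j = ω'.1 j) →
    (∀ j : Fin (N+1), (j : ℕ) ≤ T → ω.2.1 j = ω'.2.1 j) →
    (∀ j : Fin N, (j : ℕ) < T → ω.2.2 j = ω'.2.2 j) →
    f ω = f ω'

omit [Fintype X] [Fintype S] [Fintype Y] in
lemma Cyl.mono {T T' : ℕ} (h : T ≤ T') {f : Traj X S Y N → ℝ} (hf : Cyl T f) : Cyl T' f :=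
  fun ω ω' hx hs hy => hf ω ω' (fun j hj => hx j (lt_of_lt_of_le hj h))
    (fun j hj => hs j (le_trans hj h)) (fun j hj => hy j (lt_of_lt_of_le hj h))

omit [Fintype X] [Fintype S] [Fintype Y] in
lemma Cyl.mul {T : ℕ} {f g : Traj X S Y N → ℝ} (hf : Cyl T f) (hg : Cyl T g) :
    Cyl T (fun ω => f ω * g ω) := by
  intro ω ω' hx hs hy
  dsimp only
  rw [hf ω ω' hx hs hy, hg ω ω' hx hs hy]

lemma partialP_cyl (src : Source X S Y N u) (d : ℕ) : Cyl d (partialP ch src d) := by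
  intro ω ω' hx hs hy
  unfold partialP
  rw [hs 0 (Nat.zero_le d)]
  congr 1
  refine Finset.prod_congr rfl fun i hi => ?_
  rw [Finset.mem_filter] at hi
  have hid : (i : ℕ) < d := hi.2
  unfold polW
  have hpol : src.pol i ω.1 ω.2.1 ω.2.2 = src.pol i ω'.1 ω'.2.1 ω'.2.2 := by
    refine src.causal i _ _ _ _ _ _ (fun j hj => hx j (lt_trans hj hid))
      (fun j hj => hs j (by omega))
      (fun j hj => hy j (by omega))
  rw [hpol, hx i hid, hy i hid,
    hs i.succ (by simp [Fin.val_succ]; omega), hs i.castSucc (by simp; omega)]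

/-- The basic one-step marginalization identity, in multiplicative form. -/
lemma step_mul (src : Source X S Y N u) (d : Fin N) (g : Traj X S Y N → ℝ)
    (hg : Cyl (d : ℕ) g) :
    ((Fintype.card X : ℝ) * (Fintype.card S : ℝ) * (Fintype.card Y : ℝ)) *
        (∑ ω : Traj X S Y N, g ω * polW ch src d ω)
      = ∑ ω : Traj X S Y N, g ω := by
  set h1 : Traj X S Y N → ℝ := fun ω => g ω * polW ch src d ω with hh1
  -- pointwise collapse of the triple inner sum
  have hpoint : ∀ ω : Traj X S Y N, (∑ a : X, ∑ b : S, ∑ c : Y,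
      h1 (Function.update ω.1 d a, Function.update ω.2.1 d.succ b,
        Function.update ω.2.2 d c)) = g ω := by
    intro ω
    have hne : (d.castSucc : Fin (N+1)) ≠ d.succ := by
      simp [Fin.ext_iff]
    have hgconst : ∀ (a : X) (b : S) (c : Y),
        g (Function.update ω.1 d a, Function.update ω.2.1 d.succ b,
          Function.update ω.2.2 d c) = g ω := by
      intro a b c
      refine hg _ _ ?_ ?_ ?_
      · intro j hj
        exact Function.update_of_ne (Fin.ne_of_val_ne (Nat.ne_of_lt hj)) a ω.1
      · intro j hj
        refine Function.update_of_ne (Fin.ne_of_val_ne ?_) b ω.2.1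
        simp [Fin.val_succ]; omega
      · intro j hj
        exact Function.update_of_ne (Fin.ne_of_val_ne (Nat.ne_of_lt hj)) c ω.2.2
    have hpolc : ∀ (a : X) (b : S) (c : Y),
        src.pol d (Function.update ω.1 d a) (Function.update ω.2.1 d.succ b)
            (Function.update ω.2.2 d c)
          = src.pol d ω.1 ω.2.1 ω.2.2 := by
      intro a b c
      refine src.causal d _ _ _ _ _ _ ?_ ?_ ?_
      · intro j hj
        exact Function.update_of_ne (Fin.ne_of_val_ne (Nat.ne_of_lt hj)) a ω.1
      · intro j hj
        refine Function.update_of_ne (Fin.ne_of_val_ne ?_) b ω.2.1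
        simp [Fin.val_succ]; omega
      · intro j hj
        exact Function.update_of_ne (Fin.ne_of_val_ne (show (j:ℕ) ≠ (d:ℕ) by omega)) c ω.2.2
    have hexp : ∀ (a : X) (b : S) (c : Y),
        h1 (Function.update ω.1 d a, Function.update ω.2.1 d.succ b,
          Function.update ω.2.2 d c)
        = g ω * (src.pol d ω.1 ω.2.1 ω.2.2 a *
            (ch.P c a (ω.2.1 d.castSucc) * ch.Q b (ω.2.1 d.castSucc))) := by
      intro a b c
      rw [hh1]
      dsimp only
      rw [hgconst a b c]
      congr 1
      unfold polW NCFSC.W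
      dsimp only
      rw [hpolc a b c]
      simp only [Function.update_self, Function.update_of_ne hne]
    simp only [hexp]
    have hbc : ∀ a : X, (∑ b : S, ∑ c : Y, g ω * (src.pol d ω.1 ω.2.1 ω.2.2 a *
        (ch.P c a (ω.2.1 d.castSucc) * ch.Q b (ω.2.1 d.castSucc))))
        = g ω * src.pol d ω.1 ω.2.1 ω.2.2 a := by
      intro a
      have hc : ∀ b : S, (∑ c : Y, g ω * (src.pol d ω.1 ω.2.1 ω.2.2 a *
          (ch.P c a (ω.2.1 d.castSucc) * ch.Q b (ω.2.1 d.castSucc))))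
          = g ω * src.pol d ω.1 ω.2.1 ω.2.2 a * ch.Q b (ω.2.1 d.castSucc) := by
        intro b
        have : ∀ c : Y, g ω * (src.pol d ω.1 ω.2.1 ω.2.2 a *
            (ch.P c a (ω.2.1 d.castSucc) * ch.Q b (ω.2.1 d.castSucc)))
            = (g ω * src.pol d ω.1 ω.2.1 ω.2.2 a * ch.Q b (ω.2.1 d.castSucc)) *
              ch.P c a (ω.2.1 d.castSucc) := by
          intro c; ring
        simp only [this]
        rw [← Finset.mul_sum, ch.P_sum, mul_one]
      simp only [hc]
      rw [← Finset.mul_sum, ch.Q_sum, mul_one]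
    simp only [hbc]
    rw [← Finset.mul_sum, src.sum_one, mul_one]
  have hfinal : (∑ ω : Traj X S Y N, ∑ a : X, ∑ b : S, ∑ c : Y,
      h1 (Function.update ω.1 d a, Function.update ω.2.1 d.succ b,
        Function.update ω.2.2 d c))
      = (Fintype.card X : ℝ) * ((Fintype.card S : ℝ) *
          ((Fintype.card Y : ℝ) * ∑ ω : Traj X S Y N, h1 ω)) := by
    calc (∑ ω : Traj X S Y N, ∑ a : X, ∑ b : S, ∑ c : Y,
        h1 (Function.update ω.1 d a, Function.update ω.2.1 d.succ b,
          Function.update ω.2.2 d c))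
        = (Fintype.card X : ℝ) * ∑ ω : Traj X S Y N, ∑ b : S, ∑ c : Y,
            h1 (ω.1, Function.update ω.2.1 d.succ b, Function.update ω.2.2 d c) :=
          sum_update_X (fun ω => ∑ b : S, ∑ c : Y,
            h1 (ω.1, Function.update ω.2.1 d.succ b, Function.update ω.2.2 d c)) d
      _ = (Fintype.card X : ℝ) * ((Fintype.card S : ℝ) * ∑ ω : Traj X S Y N, ∑ c : Y,
            h1 (ω.1, ω.2.1, Function.update ω.2.2 d c)) :=
          congrArg (fun r => (Fintype.card X : ℝ) * r)
            (sum_update_S (fun ω => ∑ c : Y,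
              h1 (ω.1, ω.2.1, Function.update ω.2.2 d c)) d.succ)
      _ = (Fintype.card X : ℝ) * ((Fintype.card S : ℝ) *
            ((Fintype.card Y : ℝ) * ∑ ω : Traj X S Y N, h1 ω)) :=
          congrArg (fun r => (Fintype.card X : ℝ) * ((Fintype.card S : ℝ) * r))
            (sum_update_Y (fun ω => h1 ω) d)
  have e1 : ∑ ω : Traj X S Y N, g ω = ∑ ω : Traj X S Y N, ∑ a : X, ∑ b : S, ∑ c : Y,
      h1 (Function.update ω.1 d a, Function.update ω.2.1 d.succ b,
        Function.update ω.2.2 d c) :=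
    Finset.sum_congr rfl fun ω _ => (hpoint ω).symm
  rw [e1, hfinal]
  ring

lemma filter_lt_succ (d : Fin N) :
    Finset.univ.filter (fun i : Fin N => (i : ℕ) < (d : ℕ) + 1)
      = insert d (Finset.univ.filter (fun i : Fin N => (i : ℕ) < (d : ℕ))) := by
  ext i
  simp [Fin.ext_iff]
  omega

lemma partialP_succ (src : Source X S Y N u) (d : Fin N) (ω : Traj X S Y N) :
    partialP ch src ((d : ℕ) + 1) ω = partialP ch src (d : ℕ) ω * polW ch src d ω := by
  unfold partialP
  rw [filter_lt_succ, Finset.prod_insert (by simp)]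
  ring

lemma partialP_top (src : Source X S Y N u) (ω : Traj X S Y N) :
    partialP ch src N ω = jointP ch src ω := by
  unfold partialP
  rw [jointP_eq_prod]
  congr 1
  refine Finset.prod_congr ?_ fun i _ => rfl
  exact Finset.filter_true_of_mem fun i _ => i.isLt

lemma tele (src : Source X S Y N u) (T : ℕ) (f : Traj X S Y N → ℝ) (hf : Cyl T f) :
    ∀ (n d : ℕ), d + n = N → T ≤ d →
      ((Fintype.card X : ℝ) * (Fintype.card S : ℝ) * (Fintype.card Y : ℝ)) ^ n *
          (∑ ω : Traj X S Y N, jointP ch src ω * f ω)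
        = ∑ ω : Traj X S Y N, partialP ch src d ω * f ω := by
  intro n
  induction n with
  | zero =>
    intro d hd _
    have hdN : d = N := by omega
    subst hdN
    rw [pow_zero, one_mul]
    exact Finset.sum_congr rfl fun ω _ => by rw [partialP_top]
  | succ n ih =>
    intro d hd hT
    have hdN : d < N := by omega
    have hstep := step_mul ch src ⟨d, hdN⟩
      (fun ω => partialP ch src d ω * f ω)
      ((partialP_cyl ch src d).mul (hf.mono hT))
    have hsucc : ∑ ω : Traj X S Y N, partialP ch src (d + 1) ω * f ω
        = ∑ ω : Traj X S Y N, (partialP ch src d ω * f ω) * polW ch src ⟨d, hdN⟩ ω := by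
      refine Finset.sum_congr rfl fun ω _ => ?_
      rw [show partialP ch src (d+1) ω
          = partialP ch src d ω * polW ch src ⟨d, hdN⟩ ω from partialP_succ ch src ⟨d, hdN⟩ ω]
      ring
    calc ((Fintype.card X : ℝ) * (Fintype.card S : ℝ) * (Fintype.card Y : ℝ)) ^ (n+1) *
          (∑ ω : Traj X S Y N, jointP ch src ω * f ω)
        = ((Fintype.card X : ℝ) * (Fintype.card S : ℝ) * (Fintype.card Y : ℝ)) *
            (((Fintype.card X : ℝ) * (Fintype.card S : ℝ) * (Fintype.card Y : ℝ)) ^ n *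
              (∑ ω : Traj X S Y N, jointP ch src ω * f ω)) := by ring
      _ = ((Fintype.card X : ℝ) * (Fintype.card S : ℝ) * (Fintype.card Y : ℝ)) *
            (∑ ω : Traj X S Y N, partialP ch src (d+1) ω * f ω) := by
          rw [ih (d+1) (by omega) (by omega)]
      _ = ((Fintype.card X : ℝ) * (Fintype.card S : ℝ) * (Fintype.card Y : ℝ)) *
            (∑ ω : Traj X S Y N, (partialP ch src d ω * f ω) * polW ch src ⟨d, hdN⟩ ω) := by
          rw [hsucc]
      _ = ∑ ω : Traj X S Y N, partialP ch src d ω * f ω := hstep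

/-- Two sources that agree strictly before time `T` induce the same expectations of
functions of the first `T` steps. -/
lemma sum_jointP_agree [Nonempty X] (src1 src2 : Source X S Y N u) (T : ℕ) (hT : T ≤ N)
    (hpol : ∀ i : Fin N, (i : ℕ) < T → src1.pol i = src2.pol i)
    (f : Traj X S Y N → ℝ) (hf : Cyl T f) :
    ∑ ω : Traj X S Y N, jointP ch src1 ω * f ω
      = ∑ ω : Traj X S Y N, jointP ch src2 ω * f ω := by
  have hS : Nonempty S := nonempty_S_of_ch ch
  have hY : Nonempty Y := nonempty_Y_of_ch ch (Classical.arbitrary X)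
  have hK : ((Fintype.card X : ℝ) * (Fintype.card S : ℝ) * (Fintype.card Y : ℝ)) ≠ 0 := by
    have hX0 : 0 < Fintype.card X := Fintype.card_pos
    have hS0 : 0 < Fintype.card S := Fintype.card_pos
    have hY0 : 0 < Fintype.card Y := Fintype.card_pos
    positivity
  have h1 := tele ch src1 T f hf (N - T) T (by omega) le_rfl
  have h2 := tele ch src2 T f hf (N - T) T (by omega) le_rfl
  have hpp : ∑ ω : Traj X S Y N, partialP ch src1 T ω * f ω
      = ∑ ω : Traj X S Y N, partialP ch src2 T ω * f ω := by
    refine Finset.sum_congr rfl fun ω _ => ?_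
    congr 1
    unfold partialP
    congr 1
    refine Finset.prod_congr rfl fun i hi => ?_
    rw [Finset.mem_filter] at hi
    unfold polW
    rw [hpol i hi.2]
  exact mul_left_cancel₀ (pow_ne_zero _ hK) (by rw [h1, h2, hpp])

/-- `E` depends only on the coordinates `x_j (j < T)`, `s_j (j ≤ T)`, `y_j (j < T)`. -/
def CylE (T : ℕ) (E : Set (Traj X S Y N)) : Prop :=
  ∀ ω ω' : Traj X S Y N,
    (∀ j : Fin N, (j : ℕ) < T → ω.1 j = ω'.1 j) →
    (∀ j : Fin (N+1), (j : ℕ) ≤ T → ω.2.1 j = ω'.2.1 j) →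
    (∀ j : Fin N, (j : ℕ) < T → ω.2.2 j = ω'.2.2 j) →
    (ω ∈ E ↔ ω' ∈ E)

open Classical in
lemma prE_jointP_agree [Nonempty X] (src1 src2 : Source X S Y N u) (T : ℕ) (hT : T ≤ N)
    (hpol : ∀ i : Fin N, (i : ℕ) < T → src1.pol i = src2.pol i)
    (E : Set (Traj X S Y N)) (hE : CylE T E) :
    prE (jointP ch src1) E = prE (jointP ch src2) E := by
  rw [prE_eq_sum_mul_ite, prE_eq_sum_mul_ite]
  refine sum_jointP_agree ch src1 src2 T hT hpol _ ?_
  intro ω ω' hx hs hy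
  exact if_congr (hE ω ω' hx hs hy) rfl rfl

end Channel


end Proof15





section Stage

variable {N u v : ℕ}

/-- Event: the output history has the given `k`-prefix. -/
def PE (k : ℕ) (ρ : {j : Fin N // (j : ℕ) < k} → Y) : Set (Traj X S Y N) :=
  {ω | ∀ j : {j : Fin N // (j : ℕ) < k}, ω.2.2 j.1 = ρ j}

/-- The window map at stage `T` (window of the a posteriori vector). -/
def winMap (u v T : ℕ) (ω : Traj X S Y N) :
    ({j : Fin N // T ≤ (j : ℕ) + v ∧ (j : ℕ) < T} → X) ×
      ({j : Fin (N+1) // T ≤ (j : ℕ) + v ∧ (j : ℕ) + u ≤ T} → S) :=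
  ((fun j => ω.1 j.1), fun j => ω.2.1 j.1)

/-- `F` depends only on the window-or-future coordinates at stage `(k, T)`. -/
def TailF (k v T : ℕ) (F : Set (Traj X S Y N)) : Prop :=
  ∀ ω ω' : Traj X S Y N,
    (∀ j : Fin N, T ≤ (j : ℕ) + v → ω.1 j = ω'.1 j) →
    (∀ j : Fin (N+1), T ≤ (j : ℕ) + v → ω.2.1 j = ω'.2.1 j) →
    (∀ j : Fin N, k ≤ (j : ℕ) → ω.2.2 j = ω'.2.2 j) →
    (ω ∈ F ↔ ω' ∈ F)

/-- Replace the `k`-prefix of the output history according to `rep`. -/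
def Mmap (k : ℕ) (rep : ({j : Fin N // (j : ℕ) < k} → Y) → ({j : Fin N // (j : ℕ) < k} → Y))
    (y : Fin N → Y) : Fin N → Y :=
  fun j => if h : (j : ℕ) < k then rep (fun i => y i.1) ⟨j, h⟩ else y j

omit [Fintype X] [Fintype S] [Fintype Y] in
lemma Mmap_eq_of_prefix_eq {k : ℕ} (rep : _) {y y' : Fin N → Y}
    (h : ∀ j : Fin N, (j : ℕ) < k → y j = y' j) (j : Fin N) (hjk : (j : ℕ) < k) :
    Mmap k rep y j = Mmap k rep y' j := by
  unfold Mmap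
  rw [dif_pos hjk, dif_pos hjk]
  congr 1
  funext i
  exact h i.1 i.2

/-- The grafted source: from time `T` on, the policies read the remapped history. -/
def graft {k : ℕ} (src : Source X S Y N u) (T : ℕ)
    (rep : ({j : Fin N // (j : ℕ) < k} → Y) → ({j : Fin N // (j : ℕ) < k} → Y))
    (hk : k + u = T) : Source X S Y N u where
  pol := fun t x s y =>
    if T ≤ (t : ℕ) then src.pol t x s (Mmap k rep y) else src.pol t x s y
  nonneg := by
    intro t x s y a
    split <;> exact src.nonneg _ _ _ _ _
  sum_one := by
    intro t x s y
    split <;> exact src.sum_one _ _ _ _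
  causal := by
    intro t x x' s s' y y' hx hs hy
    split
    case isTrue hT =>
      refine src.causal t x x' s s' _ _ hx hs ?_
      intro j hj
      by_cases hjk : (j : ℕ) < k
      · rw [Mmap_eq_of_prefix_eq rep (fun i hik => hy i (by omega)) j hjk]
      · unfold Mmap
        rw [dif_neg hjk, dif_neg hjk]
        exact hy j hj
    case isFalse hT =>
      exact src.causal t x x' s s' y y' hx hs hy

lemma graft_pol_lt {k : ℕ} (src : Source X S Y N u) (T : ℕ) (rep : _) (hk : k + u = T)
    (i : Fin N) (hi : (i : ℕ) < T) : (graft src T rep hk).pol i = src.pol i := by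
  unfold graft
  dsimp only
  funext x s y
  rw [if_neg (by omega)]

lemma graft_pol_ge {k : ℕ} (src : Source X S Y N u) (T : ℕ) (rep : _) (hk : k + u = T)
    (i : Fin N) (hi : T ≤ (i : ℕ)) (x : Fin N → X) (s : Fin (N+1) → S) (y : Fin N → Y) :
    (graft src T rep hk).pol i x s y = src.pol i x s (Mmap k rep y) := by
  unfold graft
  dsimp only
  rw [if_pos hi]

lemma graft_markov {k : ℕ} (src : Source X S Y N u) (T : ℕ) (rep : _) (hk : k + u = T)
    (hM : IsMarkov v src) : IsMarkov v (graft src T rep hk) := by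
  intro t x x' s s' y y' hx hs hy
  unfold graft
  dsimp only
  split
  case isTrue hT =>
    refine hM t x x' s s' _ _ hx hs ?_
    intro j hj
    by_cases hjk : (j : ℕ) < k
    · rw [Mmap_eq_of_prefix_eq rep (fun i hik => hy i (by omega)) j hjk]
    · unfold Mmap
      rw [dif_neg hjk, dif_neg hjk]
      exact hy j hj
  case isFalse hT =>
    exact hM t x x' s s' y y' hx hs hy

/-- Merge two trajectories: strict-past coordinates from `π`, the rest from `β`. -/
def mg (k v T : ℕ) (π β : Traj X S Y N) : Traj X S Y N :=
  (fun j => if (j : ℕ) + v < T then π.1 j else β.1 j,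
   fun j => if (j : ℕ) + v < T then π.2.1 j else β.2.1 j,
   fun j => if (j : ℕ) < k then π.2.2 j else β.2.2 j)

omit [Fintype X] [Fintype S] [Fintype Y] in
lemma mg_invol (k v T : ℕ) (π β : Traj X S Y N) :
    mg k v T (mg k v T π β) (mg k v T β π) = π := by
  unfold mg
  refine Prod.ext ?_ (Prod.ext ?_ ?_)
  · funext j; dsimp only; split <;> simp_all
  · funext j; dsimp only; split <;> simp_all
  · funext j; dsimp only; split <;> simp_all

end Stage

section MgCoords

variable {N u v k T : ℕ}

omit [Fintype X] [Fintype S] [Fintype Y] in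
lemma mg_x_of_lt {π β : Traj X S Y N}
    (hw : ∀ j : Fin N, T ≤ (j : ℕ) + v → (j : ℕ) < T → β.1 j = π.1 j)
    (j : Fin N) (hj : (j : ℕ) < T) : (mg k v T π β).1 j = π.1 j := by
  unfold mg; dsimp only
  split
  · rfl
  · exact hw j (by omega) hj

omit [Fintype X] [Fintype S] [Fintype Y] in
lemma mg_x_of_ge {π β : Traj X S Y N} (j : Fin N) (hj : T ≤ (j : ℕ) + v) :
    (mg k v T π β).1 j = β.1 j := by
  unfold mg; dsimp only
  rw [if_neg (by omega)]

omit [Fintype X] [Fintype S] [Fintype Y] in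
lemma mg_s_of_le {π β : Traj X S Y N}
    (hw : ∀ j : Fin (N+1), T ≤ (j : ℕ) + v → (j : ℕ) + u ≤ T → β.2.1 j = π.2.1 j)
    (j : Fin (N+1)) (hj : (j : ℕ) + u ≤ T) : (mg k v T π β).2.1 j = π.2.1 j := by
  unfold mg; dsimp only
  split
  · rfl
  · exact hw j (by omega) hj

omit [Fintype X] [Fintype S] [Fintype Y] in
lemma mg_s_of_ge {π β : Traj X S Y N} (j : Fin (N+1)) (hj : T ≤ (j : ℕ) + v) :
    (mg k v T π β).2.1 j = β.2.1 j := by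
  unfold mg; dsimp only
  rw [if_neg (by omega)]

omit [Fintype X] [Fintype S] [Fintype Y] in
lemma mg_y_of_lt {π β : Traj X S Y N} (j : Fin N) (hj : (j : ℕ) < k) :
    (mg k v T π β).2.2 j = π.2.2 j := by
  unfold mg; dsimp only
  rw [if_pos hj]

omit [Fintype X] [Fintype S] [Fintype Y] in
lemma mg_y_of_ge {π β : Traj X S Y N} (j : Fin N) (hj : k ≤ (j : ℕ)) :
    (mg k v T π β).2.2 j = β.2.2 j := by
  unfold mg; dsimp only
  rw [if_neg (by omega)]

end MgCoords

section Swap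

variable {N u v : ℕ} (ch : NCFSC X S Y)

lemma swapid {k T : ℕ} (huv : u ≤ v) (hk : k + u = T)
    (src : Source X S Y N u) (hM : IsMarkov v src)
    (rep : ({j : Fin N // (j : ℕ) < k} → Y) → ({j : Fin N // (j : ℕ) < k} → Y))
    (ρ : {j : Fin N // (j : ℕ) < k} → Y)
    (ω1 ω2 : Traj X S Y N)
    (hρ1 : ω1 ∈ PE k ρ) (hρ2 : ω2 ∈ PE k (rep ρ))
    (hwx : ∀ j : Fin N, T ≤ (j : ℕ) + v → (j : ℕ) < T → ω1.1 j = ω2.1 j)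
    (hws : ∀ j : Fin (N+1), T ≤ (j : ℕ) + v → (j : ℕ) + u ≤ T → ω1.2.1 j = ω2.2.1 j) :
    jointP ch (graft src T rep hk) ω1 * jointP ch src ω2
      = jointP ch src (mg k v T ω2 ω1) * jointP ch (graft src T rep hk) (mg k v T ω1 ω2) := by
  set m21 := mg k v T ω2 ω1 with hm21
  set m12 := mg k v T ω1 ω2 with hm12
  have hw21x : ∀ j : Fin N, T ≤ (j : ℕ) + v → (j : ℕ) < T → ω1.1 j = ω2.1 j := hwx
  have hw12x : ∀ j : Fin N, T ≤ (j : ℕ) + v → (j : ℕ) < T → ω2.1 j = ω1.1 j :=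
    fun j a b => (hwx j a b).symm
  have hw21s : ∀ j : Fin (N+1), T ≤ (j : ℕ) + v → (j : ℕ) + u ≤ T → ω1.2.1 j = ω2.2.1 j := hws
  have hw12s : ∀ j : Fin (N+1), T ≤ (j : ℕ) + v → (j : ℕ) + u ≤ T → ω2.2.1 j = ω1.2.1 j :=
    fun j a b => (hws j a b).symm
  -- coordinates of m21
  have x21lt : ∀ j : Fin N, (j : ℕ) < T → m21.1 j = ω2.1 j := fun j hj => mg_x_of_lt hw21x j hj
  have x21ge : ∀ j : Fin N, T ≤ (j : ℕ) + v → m21.1 j = ω1.1 j := fun j hj => mg_x_of_ge j hj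
  have s21le : ∀ j : Fin (N+1), (j : ℕ) + u ≤ T → m21.2.1 j = ω2.2.1 j :=
    fun j hj => mg_s_of_le hw21s j hj
  have s21ge : ∀ j : Fin (N+1), T ≤ (j : ℕ) + v → m21.2.1 j = ω1.2.1 j :=
    fun j hj => mg_s_of_ge j hj
  have y21lt : ∀ j : Fin N, (j : ℕ) < k → m21.2.2 j = ω2.2.2 j := fun j hj => mg_y_of_lt j hj
  have y21ge : ∀ j : Fin N, k ≤ (j : ℕ) → m21.2.2 j = ω1.2.2 j := fun j hj => mg_y_of_ge j hj
  -- coordinates of m12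
  have x12lt : ∀ j : Fin N, (j : ℕ) < T → m12.1 j = ω1.1 j := fun j hj => mg_x_of_lt hw12x j hj
  have x12ge : ∀ j : Fin N, T ≤ (j : ℕ) + v → m12.1 j = ω2.1 j := fun j hj => mg_x_of_ge j hj
  have s12le : ∀ j : Fin (N+1), (j : ℕ) + u ≤ T → m12.2.1 j = ω1.2.1 j :=
    fun j hj => mg_s_of_le hw12s j hj
  have s12ge : ∀ j : Fin (N+1), T ≤ (j : ℕ) + v → m12.2.1 j = ω2.2.1 j :=
    fun j hj => mg_s_of_ge j hj
  have y12lt : ∀ j : Fin N, (j : ℕ) < k → m12.2.2 j = ω1.2.2 j := fun j hj => mg_y_of_lt j hj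
  have y12ge : ∀ j : Fin N, k ≤ (j : ℕ) → m12.2.2 j = ω2.2.2 j := fun j hj => mg_y_of_ge j hj
  -- prefix values
  have hpre1 : (fun i : {j : Fin N // (j : ℕ) < k} => ω1.2.2 i.1) = ρ := funext fun i => hρ1 i
  have hpre12 : (fun i : {j : Fin N // (j : ℕ) < k} => m12.2.2 i.1) = ρ :=
    funext fun i => (y12lt i.1 i.2).trans (hρ1 i)
  -- the W-factor of polW, as an abbreviation
  set Wf : Traj X S Y N → Fin N → ℝ := fun ω i =>
    ch.W (ω.2.2 i) (ω.2.1 i.succ) (ω.1 i) (ω.2.1 i.castSucc) with hWf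
  have hWf21lt : ∀ i : Fin N, (i : ℕ) < k → Wf m21 i = Wf ω2 i := by
    intro i hik
    rw [hWf]
    dsimp only
    rw [y21lt i hik, x21lt i (by omega),
      s21le i.succ (by simp [Fin.val_succ]; omega), s21le i.castSucc (by simp; omega)]
  have hWf21ge : ∀ i : Fin N, k ≤ (i : ℕ) → Wf m21 i = Wf ω1 i := by
    intro i hik
    rw [hWf]
    dsimp only
    rw [y21ge i hik, x21ge i (by omega),
      s21ge i.succ (by simp [Fin.val_succ]; omega), s21ge i.castSucc (by simp; omega)]
  have hWf12lt : ∀ i : Fin N, (i : ℕ) < k → Wf m12 i = Wf ω1 i := by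
    intro i hik
    rw [hWf]
    dsimp only
    rw [y12lt i hik, x12lt i (by omega),
      s12le i.succ (by simp [Fin.val_succ]; omega), s12le i.castSucc (by simp; omega)]
  have hWf12ge : ∀ i : Fin N, k ≤ (i : ℕ) → Wf m12 i = Wf ω2 i := by
    intro i hik
    rw [hWf]
    dsimp only
    rw [y12ge i hik, x12ge i (by omega),
      s12ge i.succ (by simp [Fin.val_succ]; omega), s12ge i.castSucc (by simp; omega)]
  -- policy factors, case i < T
  have hpol21lt : ∀ i : Fin N, (i : ℕ) < T →
      src.pol i m21.1 m21.2.1 m21.2.2 = src.pol i ω2.1 ω2.2.1 ω2.2.2 := by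
    intro i hiT
    refine hM i _ _ _ _ _ _ ?_ ?_ ?_
    · intro j hj; exact x21lt j (by omega)
    · intro j hj; exact s21le j (by omega)
    · intro j hj; exact y21lt j (by omega)
  have hpol12lt : ∀ i : Fin N, (i : ℕ) < T →
      src.pol i m12.1 m12.2.1 m12.2.2 = src.pol i ω1.1 ω1.2.1 ω1.2.2 := by
    intro i hiT
    refine hM i _ _ _ _ _ _ ?_ ?_ ?_
    · intro j hj; exact x12lt j (by omega)
    · intro j hj; exact s12le j (by omega)
    · intro j hj; exact y12lt j (by omega)
  -- policy factors, case T ≤ i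
  have hpol21ge : ∀ i : Fin N, T ≤ (i : ℕ) →
      src.pol i m21.1 m21.2.1 m21.2.2
        = src.pol i ω1.1 ω1.2.1 (Mmap k rep ω1.2.2) := by
    intro i hiT
    refine hM i _ _ _ _ _ _ ?_ ?_ ?_
    · intro j hj; exact x21ge j (by omega)
    · intro j hj; exact s21ge j (by omega)
    · intro j hj
      by_cases hjk : (j : ℕ) < k
      · rw [y21lt j hjk]
        unfold Mmap
        rw [dif_pos hjk, hpre1]
        exact hρ2 ⟨j, hjk⟩
      · rw [y21ge j (by omega)]
        unfold Mmap
        rw [dif_neg hjk]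
  have hpol12ge : ∀ i : Fin N, T ≤ (i : ℕ) →
      src.pol i m12.1 m12.2.1 (Mmap k rep m12.2.2)
        = src.pol i ω2.1 ω2.2.1 ω2.2.2 := by
    intro i hiT
    refine hM i _ _ _ _ _ _ ?_ ?_ ?_
    · intro j hj; exact x12ge j (by omega)
    · intro j hj; exact s12ge j (by omega)
    · intro j hj
      by_cases hjk : (j : ℕ) < k
      · unfold Mmap
        rw [dif_pos hjk, hpre12]
        exact (hρ2 ⟨j, hjk⟩).symm
      · unfold Mmap
        rw [dif_neg hjk]
        exact y12ge j (by omega)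
  -- per-step pair identity
  have key : ∀ i : Fin N,
      polW ch (graft src T rep hk) i ω1 * polW ch src i ω2
        = polW ch src i m21 * polW ch (graft src T rep hk) i m12 := by
    intro i
    rcases lt_or_ge (i : ℕ) T with hiT | hiT
    · -- both policies are the un-grafted ones
      have e1 : polW ch (graft src T rep hk) i ω1
          = src.pol i ω1.1 ω1.2.1 ω1.2.2 (ω1.1 i) * Wf ω1 i := by
        unfold polW
        rw [graft_pol_lt src T rep hk i hiT, hWf]
      have e2 : polW ch src i ω2 = src.pol i ω2.1 ω2.2.1 ω2.2.2 (ω2.1 i) * Wf ω2 i := by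
        unfold polW; rw [hWf]
      have e3 : polW ch src i m21
          = src.pol i ω2.1 ω2.2.1 ω2.2.2 (ω2.1 i) * Wf m21 i := by
        unfold polW
        rw [hWf]
        dsimp only
        rw [hpol21lt i hiT, x21lt i hiT]
      have e4 : polW ch (graft src T rep hk) i m12
          = src.pol i ω1.1 ω1.2.1 ω1.2.2 (ω1.1 i) * Wf m12 i := by
        unfold polW
        rw [graft_pol_lt src T rep hk i hiT, hWf]
        dsimp only
        rw [hpol12lt i hiT, x12lt i hiT]
      rcases lt_or_ge (i : ℕ) k with hik | hik
      · rw [e1, e2, e3, e4, hWf21lt i hik, hWf12lt i hik]; ring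
      · rw [e1, e2, e3, e4, hWf21ge i hik, hWf12ge i hik]; ring
    · -- grafted policies
      have hik : k ≤ (i : ℕ) := by omega
      have e1 : polW ch (graft src T rep hk) i ω1
          = src.pol i ω1.1 ω1.2.1 (Mmap k rep ω1.2.2) (ω1.1 i) * Wf ω1 i := by
        unfold polW
        rw [graft_pol_ge src T rep hk i hiT, hWf]
      have e2 : polW ch src i ω2 = src.pol i ω2.1 ω2.2.1 ω2.2.2 (ω2.1 i) * Wf ω2 i := by
        unfold polW; rw [hWf]
      have e3 : polW ch src i m21
          = src.pol i ω1.1 ω1.2.1 (Mmap k rep ω1.2.2) (ω1.1 i) * Wf m21 i := by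
        unfold polW
        rw [hWf]
        dsimp only
        rw [hpol21ge i hiT, x21ge i (by omega)]
      have e4 : polW ch (graft src T rep hk) i m12
          = src.pol i ω2.1 ω2.2.1 ω2.2.2 (ω2.1 i) * Wf m12 i := by
        unfold polW
        rw [graft_pol_ge src T rep hk i hiT, hWf]
        dsimp only
        rw [hpol12ge i hiT, x12ge i (by omega)]
      rw [e1, e2, e3, e4, hWf21ge i hik, hWf12ge i hik]
  -- initial-state factors
  have keyinit : ch.init (m21.2.1 0) * ch.init (m12.2.1 0)
      = ch.init (ω1.2.1 0) * ch.init (ω2.2.1 0) := by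
    rw [s21le 0 (by simp; omega), s12le 0 (by simp; omega)]
    ring
  -- assemble
  rw [jointP_eq_prod, jointP_eq_prod, jointP_eq_prod, jointP_eq_prod]
  have hprod : (∏ i : Fin N, polW ch (graft src T rep hk) i ω1) *
      (∏ i : Fin N, polW ch src i ω2)
      = (∏ i : Fin N, polW ch src i m21) *
        (∏ i : Fin N, polW ch (graft src T rep hk) i m12) := by
    rw [← Finset.prod_mul_distrib, ← Finset.prod_mul_distrib]
    exact Finset.prod_congr rfl fun i _ => key i
  calc ch.init (ω1.2.1 0) * (∏ i : Fin N, polW ch (graft src T rep hk) i ω1) *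
        (ch.init (ω2.2.1 0) * ∏ i : Fin N, polW ch src i ω2)
      = (ch.init (ω1.2.1 0) * ch.init (ω2.2.1 0)) *
          ((∏ i : Fin N, polW ch (graft src T rep hk) i ω1) *
            (∏ i : Fin N, polW ch src i ω2)) := by ring
    _ = (ch.init (m21.2.1 0) * ch.init (m12.2.1 0)) *
          ((∏ i : Fin N, polW ch src i m21) *
            (∏ i : Fin N, polW ch (graft src T rep hk) i m12)) := by
        rw [keyinit, hprod]
    _ = ch.init (m21.2.1 0) * (∏ i : Fin N, polW ch src i m21) *
          (ch.init (m12.2.1 0) * ∏ i : Fin N, polW ch (graft src T rep hk) i m12) := by ring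

open Classical in
lemma prE_filter {Ω : Type} [Fintype Ω] (p : Ω → ℝ) (E : Set Ω) :
    prE p E = ∑ ω ∈ Finset.univ.filter (fun ω => ω ∈ E), p ω := by
  rw [prE_eq_sum_ite]
  exact (Finset.sum_filter _ _).symm

omit [Fintype X] [Fintype S] [Fintype Y] in
lemma winMap_eq_iff {N u v T : ℕ} (ω : Traj X S Y N)
    (w : ({j : Fin N // T ≤ (j : ℕ) + v ∧ (j : ℕ) < T} → X) ×
      ({j : Fin (N+1) // T ≤ (j : ℕ) + v ∧ (j : ℕ) + u ≤ T} → S)) :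
    winMap u v T ω = w ↔
      ((∀ j : {j : Fin N // T ≤ (j : ℕ) + v ∧ (j : ℕ) < T}, ω.1 j.1 = w.1 j) ∧
        (∀ j : {j : Fin (N+1) // T ≤ (j : ℕ) + v ∧ (j : ℕ) + u ≤ T}, ω.2.1 j.1 = w.2 j)) := by
  constructor
  · intro h
    constructor
    · intro j; rw [← h]; rfl
    · intro j; rw [← h]; rfl
  · rintro ⟨h1, h2⟩
    exact Prod.ext (funext fun j => h1 j) (funext fun j => h2 j)

open Classical in
lemma swap_sum {N u v k T : ℕ} (ch : NCFSC X S Y) (huv : u ≤ v) (hk : k + u = T)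
    (src : Source X S Y N u) (hM : IsMarkov v src)
    (rep : ({j : Fin N // (j : ℕ) < k} → Y) → ({j : Fin N // (j : ℕ) < k} → Y))
    (ρ : {j : Fin N // (j : ℕ) < k} → Y)
    (F : Set (Traj X S Y N)) (hF : TailF k v T F)
    (w : ({j : Fin N // T ≤ (j : ℕ) + v ∧ (j : ℕ) < T} → X) ×
      ({j : Fin (N+1) // T ≤ (j : ℕ) + v ∧ (j : ℕ) + u ≤ T} → S)) :
    prE (jointP ch (graft src T rep hk)) ((PE k ρ ∩ F) ∩ {ω | winMap u v T ω = w}) *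
        prE (jointP ch src) (PE k (rep ρ) ∩ {ω | winMap u v T ω = w})
      = prE (jointP ch src) ((PE k (rep ρ) ∩ F) ∩ {ω | winMap u v T ω = w}) *
          prE (jointP ch (graft src T rep hk)) (PE k ρ ∩ {ω | winMap u v T ω = w}) := by
  rw [prE_filter, prE_filter, prE_filter, prE_filter]
  rw [Finset.sum_mul_sum, Finset.sum_mul_sum]
  rw [← Finset.sum_product', ← Finset.sum_product']
  refine Finset.sum_nbij'
    (fun p => (mg k v T p.2 p.1, mg k v T p.1 p.2))
    (fun p => (mg k v T p.2 p.1, mg k v T p.1 p.2)) ?_ ?_ ?_ ?_ ?_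
  · -- forward membership
    rintro ⟨ω1, ω2⟩ hp
    simp only [Finset.mem_product, Finset.mem_filter, Finset.mem_univ, true_and,
      Set.mem_inter_iff] at hp ⊢
    obtain ⟨⟨⟨hρ1, hF1⟩, hw1⟩, ⟨hρ2, hw2⟩⟩ := hp
    have hw1' := (winMap_eq_iff _ w).mp hw1
    have hw2' := (winMap_eq_iff _ w).mp hw2
    refine ⟨⟨⟨?_, ?_⟩, ?_⟩, ⟨?_, ?_⟩⟩
    · intro j; rw [mg_y_of_lt j.1 j.2]; exact hρ2 j
    · exact (hF (mg k v T ω2 ω1) ω1 (fun j hj => mg_x_of_ge j hj)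
        (fun j hj => mg_s_of_ge j hj) (fun j hj => mg_y_of_ge j hj)).mpr hF1
    · exact (winMap_eq_iff _ w).mpr
        ⟨fun j => by rw [mg_x_of_ge j.1 j.2.1]; exact hw1'.1 j,
          fun j => by rw [mg_s_of_ge j.1 j.2.1]; exact hw1'.2 j⟩
    · intro j; rw [mg_y_of_lt j.1 j.2]; exact hρ1 j
    · exact (winMap_eq_iff _ w).mpr
        ⟨fun j => by rw [mg_x_of_ge j.1 j.2.1]; exact hw2'.1 j,
          fun j => by rw [mg_s_of_ge j.1 j.2.1]; exact hw2'.2 j⟩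
  · -- backward membership
    rintro ⟨ζ1, ζ2⟩ hp
    simp only [Finset.mem_product, Finset.mem_filter, Finset.mem_univ, true_and,
      Set.mem_inter_iff] at hp ⊢
    obtain ⟨⟨⟨hρ1, hF1⟩, hw1⟩, ⟨hρ2, hw2⟩⟩ := hp
    have hw1' := (winMap_eq_iff _ w).mp hw1
    have hw2' := (winMap_eq_iff _ w).mp hw2
    refine ⟨⟨⟨?_, ?_⟩, ?_⟩, ⟨?_, ?_⟩⟩
    · intro j; rw [mg_y_of_lt j.1 j.2]; exact hρ2 j
    · exact (hF (mg k v T ζ2 ζ1) ζ1 (fun j hj => mg_x_of_ge j hj)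
        (fun j hj => mg_s_of_ge j hj) (fun j hj => mg_y_of_ge j hj)).mpr hF1
    · exact (winMap_eq_iff _ w).mpr
        ⟨fun j => by rw [mg_x_of_ge j.1 j.2.1]; exact hw1'.1 j,
          fun j => by rw [mg_s_of_ge j.1 j.2.1]; exact hw1'.2 j⟩
    · intro j; rw [mg_y_of_lt j.1 j.2]; exact hρ1 j
    · exact (winMap_eq_iff _ w).mpr
        ⟨fun j => by rw [mg_x_of_ge j.1 j.2.1]; exact hw2'.1 j,
          fun j => by rw [mg_s_of_ge j.1 j.2.1]; exact hw2'.2 j⟩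
  · rintro ⟨ω1, ω2⟩ -
    exact Prod.ext (mg_invol k v T ω1 ω2) (mg_invol k v T ω2 ω1)
  · rintro ⟨ζ1, ζ2⟩ -
    exact Prod.ext (mg_invol k v T ζ1 ζ2) (mg_invol k v T ζ2 ζ1)
  · rintro ⟨ω1, ω2⟩ hp
    simp only [Finset.mem_product, Finset.mem_filter, Finset.mem_univ, true_and,
      Set.mem_inter_iff] at hp
    obtain ⟨⟨⟨hρ1, hF1⟩, hw1⟩, ⟨hρ2, hw2⟩⟩ := hp
    have hw1' := (winMap_eq_iff _ w).mp hw1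
    have hw2' := (winMap_eq_iff _ w).mp hw2
    refine swapid ch huv hk src hM rep ρ ω1 ω2 hρ1 hρ2 ?_ ?_
    · intro j h1 h2
      rw [hw1'.1 ⟨j, ⟨h1, h2⟩⟩, hw2'.1 ⟨j, ⟨h1, h2⟩⟩]
    · intro j h1 h2
      rw [hw1'.2 ⟨j, ⟨h1, h2⟩⟩, hw2'.2 ⟨j, ⟨h1, h2⟩⟩]

open Classical in
lemma transfer {N u v k T : ℕ} [Nonempty X] (ch : NCFSC X S Y) (huv : u ≤ v)
    (hk : k + u = T) (hTN : T ≤ N)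
    (src : Source X S Y N u) (hM : IsMarkov v src)
    (rep : ({j : Fin N // (j : ℕ) < k} → Y) → ({j : Fin N // (j : ℕ) < k} → Y))
    (ρ : {j : Fin N // (j : ℕ) < k} → Y)
    (hpos' : 0 < prE (jointP ch src) (PE k (rep ρ)))
    (halpha : ∀ w, prE (jointP ch src) (PE k ρ ∩ {ω | winMap u v T ω = w}) *
          prE (jointP ch src) (PE k (rep ρ))
        = prE (jointP ch src) (PE k (rep ρ) ∩ {ω | winMap u v T ω = w}) *
          prE (jointP ch src) (PE k ρ))
    (F : Set (Traj X S Y N)) (hF : TailF k v T F) :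
    prE (jointP ch (graft src T rep hk)) (PE k ρ ∩ F) * prE (jointP ch src) (PE k (rep ρ))
      = prE (jointP ch src) (PE k (rep ρ) ∩ F) * prE (jointP ch src) (PE k ρ) := by
  have hagree : ∀ i : Fin N, (i : ℕ) < T → (graft src T rep hk).pol i = src.pol i :=
    fun i hi => graft_pol_lt src T rep hk i hi
  have hDeq : ∀ w, prE (jointP ch (graft src T rep hk)) (PE k ρ ∩ {ω | winMap u v T ω = w})
      = prE (jointP ch src) (PE k ρ ∩ {ω | winMap u v T ω = w}) := by
    intro w
    refine prE_jointP_agree ch _ _ T hTN hagree _ ?_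
    intro ω ω' hx hs hy
    have h1 : ω ∈ PE k ρ ↔ ω' ∈ PE k ρ := by
      constructor <;> intro h j
      · rw [← hy j.1 (by omega)]; exact h j
      · rw [hy j.1 (by omega)]; exact h j
    have h2 : winMap u v T ω = w ↔ winMap u v T ω' = w := by
      rw [winMap_eq_iff, winMap_eq_iff]
      constructor <;> rintro ⟨ha, hb⟩ <;> refine ⟨fun j => ?_, fun j => ?_⟩
      · rw [← hx j.1 j.2.2]; exact ha j
      · rw [← hs j.1 (by omega)]; exact hb j
      · rw [hx j.1 j.2.2]; exact ha j
      · rw [hs j.1 (by omega)]; exact hb j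
    constructor
    · rintro ⟨m1, m2⟩; exact ⟨h1.mp m1, h2.mp m2⟩
    · rintro ⟨m1, m2⟩; exact ⟨h1.mpr m1, h2.mpr m2⟩
  have hwkey : ∀ w,
      prE (jointP ch (graft src T rep hk)) ((PE k ρ ∩ F) ∩ {ω | winMap u v T ω = w}) *
          prE (jointP ch src) (PE k (rep ρ))
        = prE (jointP ch src) ((PE k (rep ρ) ∩ F) ∩ {ω | winMap u v T ω = w}) *
          prE (jointP ch src) (PE k ρ) := by
    intro w
    have hswap := swap_sum ch huv hk src hM rep ρ F hF w
    have halw := halpha w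
    by_cases hb : prE (jointP ch src) (PE k (rep ρ) ∩ {ω | winMap u v T ω = w}) = 0
    · have hd0 : prE (jointP ch src) (PE k ρ ∩ {ω | winMap u v T ω = w}) = 0 := by
        rw [hb, zero_mul] at halw
        rcases mul_eq_zero.mp halw with h | h
        · exact h
        · exact absurd h (ne_of_gt hpos')
      have ha0 : prE (jointP ch (graft src T rep hk))
          ((PE k ρ ∩ F) ∩ {ω | winMap u v T ω = w}) = 0 := by
        refine le_antisymm ?_ (prE_nonneg (jointP_nonneg ch _) _)
        have hsub : ((PE k ρ ∩ F) ∩ {ω | winMap u v T ω = w})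
            ⊆ (PE k ρ ∩ {ω | winMap u v T ω = w}) := fun ω hω => ⟨hω.1.1, hω.2⟩
        calc prE (jointP ch (graft src T rep hk)) ((PE k ρ ∩ F) ∩ {ω | winMap u v T ω = w})
            ≤ prE (jointP ch (graft src T rep hk)) (PE k ρ ∩ {ω | winMap u v T ω = w}) :=
              prE_mono (jointP_nonneg ch _) hsub
          _ = prE (jointP ch src) (PE k ρ ∩ {ω | winMap u v T ω = w}) := hDeq w
          _ = 0 := hd0
      have hc0 : prE (jointP ch src) ((PE k (rep ρ) ∩ F) ∩ {ω | winMap u v T ω = w}) = 0 := by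
        refine le_antisymm ?_ (prE_nonneg (jointP_nonneg ch _) _)
        calc prE (jointP ch src) ((PE k (rep ρ) ∩ F) ∩ {ω | winMap u v T ω = w})
            ≤ prE (jointP ch src) (PE k (rep ρ) ∩ {ω | winMap u v T ω = w}) :=
              prE_mono (jointP_nonneg ch _) (fun ω hω => ⟨hω.1.1, hω.2⟩)
          _ = 0 := hb
      rw [ha0, hc0, zero_mul, zero_mul]
    · refine mul_right_cancel₀ hb ?_
      calc prE (jointP ch (graft src T rep hk)) ((PE k ρ ∩ F) ∩ {ω | winMap u v T ω = w}) *
            prE (jointP ch src) (PE k (rep ρ)) *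
            prE (jointP ch src) (PE k (rep ρ) ∩ {ω | winMap u v T ω = w})
          = (prE (jointP ch (graft src T rep hk))
                ((PE k ρ ∩ F) ∩ {ω | winMap u v T ω = w}) *
              prE (jointP ch src) (PE k (rep ρ) ∩ {ω | winMap u v T ω = w})) *
              prE (jointP ch src) (PE k (rep ρ)) := by ring
        _ = (prE (jointP ch src) ((PE k (rep ρ) ∩ F) ∩ {ω | winMap u v T ω = w}) *
              prE (jointP ch (graft src T rep hk)) (PE k ρ ∩ {ω | winMap u v T ω = w})) *
              prE (jointP ch src) (PE k (rep ρ)) := by rw [hswap]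
        _ = prE (jointP ch src) ((PE k (rep ρ) ∩ F) ∩ {ω | winMap u v T ω = w}) *
              (prE (jointP ch src) (PE k ρ ∩ {ω | winMap u v T ω = w}) *
                prE (jointP ch src) (PE k (rep ρ))) := by rw [hDeq w]; ring
        _ = prE (jointP ch src) ((PE k (rep ρ) ∩ F) ∩ {ω | winMap u v T ω = w}) *
              (prE (jointP ch src) (PE k (rep ρ) ∩ {ω | winMap u v T ω = w}) *
                prE (jointP ch src) (PE k ρ)) := by rw [halw]
        _ = prE (jointP ch src) ((PE k (rep ρ) ∩ F) ∩ {ω | winMap u v T ω = w}) *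
              prE (jointP ch src) (PE k ρ) *
              prE (jointP ch src) (PE k (rep ρ) ∩ {ω | winMap u v T ω = w}) := by ring
  rw [prE_partition (jointP ch (graft src T rep hk)) (PE k ρ ∩ F) (winMap u v T),
    prE_partition (jointP ch src) (PE k (rep ρ) ∩ F) (winMap u v T),
    Finset.sum_mul, Finset.sum_mul]
  exact Finset.sum_congr rfl fun w _ => hwkey w

open Classical in
lemma graft_PE_eq {N u v k T : ℕ} [Nonempty X] (ch : NCFSC X S Y)
    (hk : k + u = T) (hTN : T ≤ N) (src : Source X S Y N u)
    (rep : ({j : Fin N // (j : ℕ) < k} → Y) → ({j : Fin N // (j : ℕ) < k} → Y))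
    (ρ : {j : Fin N // (j : ℕ) < k} → Y) :
    prE (jointP ch (graft src T rep hk)) (PE k ρ) = prE (jointP ch src) (PE k ρ) := by
  refine prE_jointP_agree ch _ _ T hTN (fun i hi => graft_pol_lt src T rep hk i hi) _ ?_
  intro ω ω' hx hs hy
  constructor <;> intro h j
  · rw [← hy j.1 (by omega)]; exact h j
  · rw [hy j.1 (by omega)]; exact h j

end Swap




section TermReorg

variable {N u v : ℕ}

/-- The `A`-variable of the `t`-th term of `objWin`. -/
def fAt (v : ℕ) (t : Fin N) (ω : Traj X S Y N) :
    ({j : Fin N // (t : ℕ) ≤ (j : ℕ) + v ∧ (j : ℕ) ≤ (t : ℕ)} → X) ×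
      ({j : Fin (N + 1) // (j : ℕ) + v = (t : ℕ)} → S) :=
  ((fun j => ω.1 j.1), fun j => ω.2.1 j.1)

/-- The `B`-variable. -/
def fBt (t : Fin N) (ω : Traj X S Y N) : Y := ω.2.2 t

/-- The `C`-variable. -/
def fCt (t : Fin N) (ω : Traj X S Y N) : {j : Fin N // (j : ℕ) < (t : ℕ)} → Y :=
  fun j => ω.2.2 j.1

lemma objWin_eq (ch : NCFSC X S Y) (src : Source X S Y N u) :
    objWin v ch src = ∑ t : Fin N, condMI (jointP ch src) (fAt v t) (fBt t) (fCt t) := rfl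

/-- Summand of `condMI` for the `t`-th term. -/
def smd (p : Traj X S Y N → ℝ) (t : Fin N)
    (a : ({j : Fin N // (t : ℕ) ≤ (j : ℕ) + v ∧ (j : ℕ) ≤ (t : ℕ)} → X) ×
      ({j : Fin (N + 1) // (j : ℕ) + v = (t : ℕ)} → S))
    (b : Y) (c : {j : Fin N // (j : ℕ) < (t : ℕ)} → Y) : ℝ :=
  prE p {ω | fAt v t ω = a ∧ fBt t ω = b ∧ fCt t ω = c} *
    Real.log (condPr p {ω | fAt v t ω = a ∧ fBt t ω = b} {ω | fCt t ω = c} /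
      (condPr p {ω | fAt v t ω = a} {ω | fCt t ω = c} *
        condPr p {ω | fBt t ω = b} {ω | fCt t ω = c}))

lemma condMI_eq_sum_smd (p : Traj X S Y N → ℝ) (t : Fin N) :
    condMI p (fAt v t) (fBt t) (fCt t) = ∑ a, ∑ b, ∑ c, smd (v := v) p t a b c := rfl

/-- Restriction of a `C`-value to the `k`-prefix. -/
def restrC (k : ℕ) {t : Fin N} (hkt : k ≤ (t : ℕ))
    (c : {j : Fin N // (j : ℕ) < (t : ℕ)} → Y) : {j : Fin N // (j : ℕ) < k} → Y :=
  fun i => c ⟨i.1, by omega⟩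

/-- Splice a prefix onto a `C`-value. -/
def spliceC (k : ℕ) {t : Fin N} (ρ' : {j : Fin N // (j : ℕ) < k} → Y)
    (c : {j : Fin N // (j : ℕ) < (t : ℕ)} → Y) : {j : Fin N // (j : ℕ) < (t : ℕ)} → Y :=
  fun j => if h : (j.1 : ℕ) < k then ρ' ⟨j.1, h⟩ else c j

omit [Fintype X] [Fintype S] [Fintype Y] in
lemma restrC_spliceC (k : ℕ) {t : Fin N} (hkt : k ≤ (t : ℕ))
    (ρ' : {j : Fin N // (j : ℕ) < k} → Y) (c : {j : Fin N // (j : ℕ) < (t : ℕ)} → Y) :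
    restrC k hkt (spliceC k ρ' c) = ρ' := by
  funext i
  unfold restrC spliceC
  rw [dif_pos i.2]

omit [Fintype X] [Fintype S] [Fintype Y] in
lemma spliceC_restrC (k : ℕ) {t : Fin N} (hkt : k ≤ (t : ℕ))
    (c : {j : Fin N // (j : ℕ) < (t : ℕ)} → Y) :
    spliceC k (restrC k hkt c) c = c := by
  funext j
  unfold restrC spliceC
  split
  · rfl
  · rfl

omit [Fintype X] [Fintype S] [Fintype Y] in
lemma spliceC_spliceC (k : ℕ) {t : Fin N} {hkt : k ≤ (t : ℕ)}
    {c : {j : Fin N // (j : ℕ) < (t : ℕ)} → Y} {ρ : {j : Fin N // (j : ℕ) < k} → Y}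
    (hc : restrC k hkt c = ρ) (ρ' : {j : Fin N // (j : ℕ) < k} → Y) :
    spliceC k ρ (spliceC k ρ' c) = c := by
  funext j
  unfold spliceC
  by_cases hj : (j.1 : ℕ) < k
  · rw [dif_pos hj, ← hc]
    unfold restrC
    congr 1
  · rw [dif_neg hj, dif_neg hj]

omit [Fintype X] [Fintype S] [Fintype Y] in
lemma spliceC_tail (k : ℕ) {t : Fin N} (ρ' : {j : Fin N // (j : ℕ) < k} → Y)
    (c : {j : Fin N // (j : ℕ) < (t : ℕ)} → Y) (j : {j : Fin N // (j : ℕ) < (t : ℕ)})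
    (hj : k ≤ (j.1 : ℕ)) : spliceC k ρ' c j = c j := by
  unfold spliceC
  rw [dif_neg (by omega)]

/-- The tail part of the `C`-event. -/
def FCtail (k : ℕ) (t : Fin N) (c : {j : Fin N // (j : ℕ) < (t : ℕ)} → Y) :
    Set (Traj X S Y N) :=
  {ω | ∀ j : {j : Fin N // (j : ℕ) < (t : ℕ)}, k ≤ (j.1 : ℕ) → ω.2.2 j.1 = c j}

omit [Fintype X] [Fintype S] [Fintype Y] in
lemma EC_decomp (k : ℕ) {t : Fin N} (hkt : k ≤ (t : ℕ))
    (c : {j : Fin N // (j : ℕ) < (t : ℕ)} → Y) :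
    {ω : Traj X S Y N | fCt t ω = c} = PE k (restrC k hkt c) ∩ FCtail k t c := by
  ext ω
  simp only [Set.mem_setOf_eq, Set.mem_inter_iff]
  constructor
  · intro h
    constructor
    · intro j
      have := congrFun h ⟨j.1, by omega⟩
      exact this
    · intro j _
      exact congrFun h j
  · rintro ⟨h1, h2⟩
    funext j
    by_cases hj : (j.1 : ℕ) < k
    · have := h1 ⟨j.1, hj⟩
      unfold restrC at this
      simpa [fCt] using this
    · exact h2 j (by omega)

omit [Fintype X] [Fintype S] [Fintype Y] in
lemma FCtail_spliceC (k : ℕ) {t : Fin N} (ρ' : {j : Fin N // (j : ℕ) < k} → Y)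
    (c : {j : Fin N // (j : ℕ) < (t : ℕ)} → Y) :
    FCtail (X := X) (S := S) k t (spliceC k ρ' c) = FCtail (X := X) (S := S) k t c := by
  ext ω
  unfold FCtail
  simp only [Set.mem_setOf_eq]
  constructor <;> intro h j hj
  · rw [← spliceC_tail k ρ' c j hj]; exact h j hj
  · rw [spliceC_tail k ρ' c j hj]; exact h j hj

omit [Fintype X] [Fintype S] [Fintype Y] in
lemma tailF_FCtail {k T : ℕ} (t : Fin N) (c : {j : Fin N // (j : ℕ) < (t : ℕ)} → Y) :
    TailF (X := X) (S := S) k v T (FCtail k t c) := by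
  intro ω ω' hx hs hy
  unfold FCtail
  simp only [Set.mem_setOf_eq]
  constructor <;> intro h j hj
  · rw [← hy j.1 hj]; exact h j hj
  · rw [hy j.1 hj]; exact h j hj

omit [Fintype X] [Fintype S] [Fintype Y] in
lemma tailF_FA {k T : ℕ} (hTv : T ≤ N) (t : Fin N) (hTt : T ≤ (t : ℕ))
    (a : ({j : Fin N // (t : ℕ) ≤ (j : ℕ) + v ∧ (j : ℕ) ≤ (t : ℕ)} → X) ×
      ({j : Fin (N + 1) // (j : ℕ) + v = (t : ℕ)} → S)) :
    TailF (Y := Y) k v T {ω | fAt v t ω = a} := by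
  intro ω ω' hx hs hy
  simp only [Set.mem_setOf_eq]
  unfold fAt
  rw [Prod.ext_iff, Prod.ext_iff, funext_iff, funext_iff, funext_iff, funext_iff]
  constructor <;> rintro ⟨h1, h2⟩ <;> refine ⟨fun j => ?_, fun j => ?_⟩ <;> dsimp only
  · rw [← hx j.1 (by omega)]; exact h1 j
  · rw [← hs j.1 (by omega)]; exact h2 j
  · rw [hx j.1 (by omega)]; exact h1 j
  · rw [hs j.1 (by omega)]; exact h2 j

omit [Fintype X] [Fintype S] [Fintype Y] in
lemma tailF_FB {k T : ℕ} (hk : k + u = T) (t : Fin N) (hTt : T ≤ (t : ℕ)) (b : Y) :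
    TailF (X := X) (S := S) k v T {ω | fBt t ω = b} := by
  intro ω ω' hx hs hy
  simp only [Set.mem_setOf_eq]
  unfold fBt
  rw [hy t (by omega)]

omit [Fintype X] [Fintype S] [Fintype Y] in
lemma TailF.inter {k T : ℕ} {F G : Set (Traj X S Y N)} (hF : TailF k v T F)
    (hG : TailF k v T G) : TailF k v T (F ∩ G) := by
  intro ω ω' hx hs hy
  rw [Set.mem_inter_iff, Set.mem_inter_iff, hF ω ω' hx hs hy, hG ω ω' hx hs hy]

end TermReorg

section SummandTransfer

variable {N u v : ℕ}

omit [Fintype X] [Fintype S] [Fintype Y] in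
lemma inter_EC_decomp (k : ℕ) {t : Fin N} (hkt : k ≤ (t : ℕ))
    (c : {j : Fin N // (j : ℕ) < (t : ℕ)} → Y) (E : Set (Traj X S Y N)) :
    E ∩ {ω | fCt t ω = c} = PE k (restrC k hkt c) ∩ (E ∩ FCtail k t c) := by
  rw [EC_decomp k hkt c]
  ext ω
  simp only [Set.mem_inter_iff]
  tauto

omit [Fintype X] [Fintype S] [Fintype Y] in
lemma EABC_eq {t : Fin N}
    (a : ({j : Fin N // (t : ℕ) ≤ (j : ℕ) + v ∧ (j : ℕ) ≤ (t : ℕ)} → X) ×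
      ({j : Fin (N + 1) // (j : ℕ) + v = (t : ℕ)} → S))
    (b : Y) (c : {j : Fin N // (j : ℕ) < (t : ℕ)} → Y) :
    {ω : Traj X S Y N | fAt v t ω = a ∧ fBt t ω = b ∧ fCt t ω = c}
      = {ω | fAt v t ω = a ∧ fBt t ω = b} ∩ {ω | fCt t ω = c} := by
  ext ω
  simp only [Set.mem_setOf_eq, Set.mem_inter_iff]
  tauto

omit [Fintype X] [Fintype S] [Fintype Y] in
lemma EAB_eq {t : Fin N}
    (a : ({j : Fin N // (t : ℕ) ≤ (j : ℕ) + v ∧ (j : ℕ) ≤ (t : ℕ)} → X) ×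
      ({j : Fin (N + 1) // (j : ℕ) + v = (t : ℕ)} → S)) (b : Y) :
    {ω : Traj X S Y N | fAt v t ω = a ∧ fBt t ω = b}
      = {ω | fAt v t ω = a} ∩ {ω | fBt t ω = b} := by
  ext ω
  simp only [Set.mem_setOf_eq, Set.mem_inter_iff]

open Classical in
lemma smd_transfer {k T : ℕ} [Nonempty X] (ch : NCFSC X S Y) (huv : u ≤ v)
    (hk : k + u = T) (hTN : T ≤ N)
    (src : Source X S Y N u) (hM : IsMarkov v src)
    (rep : ({j : Fin N // (j : ℕ) < k} → Y) → ({j : Fin N // (j : ℕ) < k} → Y))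
    (ρ : {j : Fin N // (j : ℕ) < k} → Y)
    (hpos : 0 < prE (jointP ch src) (PE k ρ))
    (hpos' : 0 < prE (jointP ch src) (PE k (rep ρ)))
    (halpha : ∀ w, prE (jointP ch src) (PE k ρ ∩ {ω | winMap u v T ω = w}) *
          prE (jointP ch src) (PE k (rep ρ))
        = prE (jointP ch src) (PE k (rep ρ) ∩ {ω | winMap u v T ω = w}) *
          prE (jointP ch src) (PE k ρ))
    (t : Fin N) (hTt : T ≤ (t : ℕ))
    (a : ({j : Fin N // (t : ℕ) ≤ (j : ℕ) + v ∧ (j : ℕ) ≤ (t : ℕ)} → X) ×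
      ({j : Fin (N + 1) // (j : ℕ) + v = (t : ℕ)} → S))
    (b : Y) (c : {j : Fin N // (j : ℕ) < (t : ℕ)} → Y)
    (hc : restrC k (show k ≤ (t : ℕ) by omega) c = ρ) :
    smd (v := v) (jointP ch (graft src T rep hk)) t a b c
      = (prE (jointP ch src) (PE k ρ) / prE (jointP ch src) (PE k (rep ρ))) *
          smd (v := v) (jointP ch src) t a b (spliceC k (rep ρ) c) := by
  have hkt : k ≤ (t : ℕ) := by omega
  set p : Traj X S Y N → ℝ := jointP ch src
  set p' : Traj X S Y N → ℝ := jointP ch (graft src T rep hk)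
  set rr : ℝ := prE p (PE k ρ) / prE p (PE k (rep ρ)) with hrrdef
  have hrrpos : 0 < rr := div_pos hpos hpos'
  have htr : ∀ F : Set (Traj X S Y N), TailF k v T F →
      prE p' (PE k ρ ∩ F) = rr * prE p (PE k (rep ρ) ∩ F) := by
    intro F hF
    have h := transfer ch huv hk hTN src hM rep ρ hpos' halpha F hF
    rw [hrrdef, div_mul_eq_mul_div, eq_div_iff (ne_of_gt hpos')]
    linear_combination h
  -- TailF facts
  have hFA : TailF (Y := Y) k v T {ω | fAt v t ω = a} := tailF_FA hTN t hTt a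
  have hFB : TailF (X := X) (S := S) k v T {ω | fBt t ω = b} := tailF_FB hk t hTt b
  have hFC : TailF (X := X) (S := S) k v T (FCtail k t c) := tailF_FCtail t c
  -- decompositions
  have eABC : {ω : Traj X S Y N | fAt v t ω = a ∧ fBt t ω = b ∧ fCt t ω = c}
      = PE k ρ ∩ (({ω | fAt v t ω = a} ∩ {ω | fBt t ω = b}) ∩ FCtail k t c) := by
    rw [EABC_eq, inter_EC_decomp k hkt c, hc, EAB_eq]
  have eAB : {ω : Traj X S Y N | fAt v t ω = a ∧ fBt t ω = b} ∩ {ω | fCt t ω = c}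
      = PE k ρ ∩ (({ω | fAt v t ω = a} ∩ {ω | fBt t ω = b}) ∩ FCtail k t c) := by
    rw [inter_EC_decomp k hkt c, hc, EAB_eq]
  have eA : {ω : Traj X S Y N | fAt v t ω = a} ∩ {ω | fCt t ω = c}
      = PE k ρ ∩ ({ω | fAt v t ω = a} ∩ FCtail k t c) := by
    rw [inter_EC_decomp k hkt c, hc]
  have eB : {ω : Traj X S Y N | fBt t ω = b} ∩ {ω | fCt t ω = c}
      = PE k ρ ∩ ({ω | fBt t ω = b} ∩ FCtail k t c) := by
    rw [inter_EC_decomp k hkt c, hc]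
  have eC : {ω : Traj X S Y N | fCt t ω = c} = PE k ρ ∩ FCtail k t c := by
    rw [EC_decomp k hkt c, hc]
  -- spliced decompositions
  have hc' : restrC k hkt (spliceC k (rep ρ) c) = rep ρ := restrC_spliceC k hkt (rep ρ) c
  have eABC' : {ω : Traj X S Y N | fAt v t ω = a ∧ fBt t ω = b ∧
        fCt t ω = spliceC k (rep ρ) c}
      = PE k (rep ρ) ∩ (({ω | fAt v t ω = a} ∩ {ω | fBt t ω = b}) ∩ FCtail k t c) := by
    rw [EABC_eq, inter_EC_decomp k hkt (spliceC k (rep ρ) c), hc', EAB_eq,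
      FCtail_spliceC]
  have eAB' : {ω : Traj X S Y N | fAt v t ω = a ∧ fBt t ω = b} ∩
        {ω | fCt t ω = spliceC k (rep ρ) c}
      = PE k (rep ρ) ∩ (({ω | fAt v t ω = a} ∩ {ω | fBt t ω = b}) ∩ FCtail k t c) := by
    rw [inter_EC_decomp k hkt (spliceC k (rep ρ) c), hc', EAB_eq, FCtail_spliceC]
  have eA' : {ω : Traj X S Y N | fAt v t ω = a} ∩ {ω | fCt t ω = spliceC k (rep ρ) c}
      = PE k (rep ρ) ∩ ({ω | fAt v t ω = a} ∩ FCtail k t c) := by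
    rw [inter_EC_decomp k hkt (spliceC k (rep ρ) c), hc', FCtail_spliceC]
  have eB' : {ω : Traj X S Y N | fBt t ω = b} ∩ {ω | fCt t ω = spliceC k (rep ρ) c}
      = PE k (rep ρ) ∩ ({ω | fBt t ω = b} ∩ FCtail k t c) := by
    rw [inter_EC_decomp k hkt (spliceC k (rep ρ) c), hc', FCtail_spliceC]
  have eC' : {ω : Traj X S Y N | fCt t ω = spliceC k (rep ρ) c}
      = PE k (rep ρ) ∩ FCtail k t c := by
    rw [EC_decomp k hkt (spliceC k (rep ρ) c), hc', FCtail_spliceC]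
  -- transfer the four probabilities
  have tABC := htr _ ((hFA.inter hFB).inter hFC)
  have tA := htr _ (hFA.inter hFC)
  have tB := htr _ (hFB.inter hFC)
  have tC := htr _ hFC
  -- now rewrite the summand
  unfold smd condPr
  rw [eABC, eAB, eA, eB, eC, eABC', eAB', eA', eB', eC']
  rw [tABC, tA, tB, tC]
  rw [mul_div_mul_left _ _ (ne_of_gt hrrpos), mul_div_mul_left _ _ (ne_of_gt hrrpos),
    mul_div_mul_left _ _ (ne_of_gt hrrpos)]
  ring

end SummandTransfer

section Bucket

variable {N u v : ℕ}

open Classical in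
/-- The part of the `t`-th `condMI` term coming from histories with prefix `ρ`. -/
def tailTerm (p : Traj X S Y N → ℝ) (k : ℕ) (t : Fin N) (hkt : k ≤ (t : ℕ))
    (ρ : {j : Fin N // (j : ℕ) < k} → Y) : ℝ :=
  ∑ a, ∑ b, ∑ c, if restrC k hkt c = ρ then smd (v := v) p t a b c else 0

open Classical in
lemma condMI_group (p : Traj X S Y N → ℝ) (k : ℕ) (t : Fin N) (hkt : k ≤ (t : ℕ)) :
    condMI p (fAt v t) (fBt t) (fCt t)
      = ∑ ρ : {j : Fin N // (j : ℕ) < k} → Y, tailTerm (v := v) p k t hkt ρ := by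
  rw [condMI_eq_sum_smd]
  unfold tailTerm
  calc (∑ a, ∑ b, ∑ c, smd (v := v) p t a b c)
      = ∑ a, ∑ b, ∑ c, ∑ ρ : {j : Fin N // (j : ℕ) < k} → Y,
          (if restrC k hkt c = ρ then smd (v := v) p t a b c else 0) := by
        refine Finset.sum_congr rfl fun a _ => Finset.sum_congr rfl fun b _ =>
          Finset.sum_congr rfl fun c _ => ?_
        rw [Finset.sum_ite_eq Finset.univ (restrC k hkt c)
          (fun _ => smd (v := v) p t a b c)]
        rw [if_pos (Finset.mem_univ _)]
    _ = ∑ a, ∑ b, ∑ ρ : {j : Fin N // (j : ℕ) < k} → Y, ∑ c,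
          (if restrC k hkt c = ρ then smd (v := v) p t a b c else 0) := by
        refine Finset.sum_congr rfl fun a _ => Finset.sum_congr rfl fun b _ => ?_
        exact Finset.sum_comm
    _ = ∑ a, ∑ ρ : {j : Fin N // (j : ℕ) < k} → Y, ∑ b, ∑ c,
          (if restrC k hkt c = ρ then smd (v := v) p t a b c else 0) := by
        refine Finset.sum_congr rfl fun a _ => ?_
        exact Finset.sum_comm
    _ = ∑ ρ : {j : Fin N // (j : ℕ) < k} → Y, ∑ a, ∑ b, ∑ c,
          (if restrC k hkt c = ρ then smd (v := v) p t a b c else 0) :=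
        Finset.sum_comm

open Classical in
lemma tailTerm_zero (ch : NCFSC X S Y) (src0 : Source X S Y N u) (src : Source X S Y N u)
    (k : ℕ) (t : Fin N) (hkt : k ≤ (t : ℕ)) (ρ : {j : Fin N // (j : ℕ) < k} → Y)
    (hzero : prE (jointP ch src) (PE k ρ) = 0)
    (hinv : prE (jointP ch src0) (PE k ρ) = prE (jointP ch src) (PE k ρ)) :
    tailTerm (v := v) (jointP ch src0) k t hkt ρ = 0 := by
  unfold tailTerm
  refine Finset.sum_eq_zero fun a _ => Finset.sum_eq_zero fun b _ =>
    Finset.sum_eq_zero fun c _ => ?_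
  split
  case isFalse => rfl
  case isTrue hc =>
    unfold smd
    have hsub : {ω : Traj X S Y N | fAt v t ω = a ∧ fBt t ω = b ∧ fCt t ω = c}
        ⊆ PE k ρ := by
      intro ω hω
      have : ω ∈ {ω : Traj X S Y N | fCt t ω = c} := hω.2.2
      rw [EC_decomp k hkt c, hc] at this
      exact this.1
    have h0 : prE (jointP ch src0)
        {ω : Traj X S Y N | fAt v t ω = a ∧ fBt t ω = b ∧ fCt t ω = c} = 0 := by
      refine le_antisymm ?_ (prE_nonneg (jointP_nonneg ch _) _)
      calc prE (jointP ch src0) {ω : Traj X S Y N | fAt v t ω = a ∧ fBt t ω = b ∧ fCt t ω = c}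
          ≤ prE (jointP ch src0) (PE k ρ) := prE_mono (jointP_nonneg ch _) hsub
        _ = 0 := by rw [hinv, hzero]
    rw [h0, zero_mul]

open Classical in
lemma tailTerm_graft (ch : NCFSC X S Y) {k T : ℕ} [Nonempty X] (huv : u ≤ v)
    (hk : k + u = T) (hTN : T ≤ N)
    (src : Source X S Y N u) (hM : IsMarkov v src)
    (rep : ({j : Fin N // (j : ℕ) < k} → Y) → ({j : Fin N // (j : ℕ) < k} → Y))
    (ρ : {j : Fin N // (j : ℕ) < k} → Y)
    (hpos : 0 < prE (jointP ch src) (PE k ρ))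
    (hpos' : 0 < prE (jointP ch src) (PE k (rep ρ)))
    (halpha : ∀ w, prE (jointP ch src) (PE k ρ ∩ {ω | winMap u v T ω = w}) *
          prE (jointP ch src) (PE k (rep ρ))
        = prE (jointP ch src) (PE k (rep ρ) ∩ {ω | winMap u v T ω = w}) *
          prE (jointP ch src) (PE k ρ))
    (t : Fin N) (hTt : T ≤ (t : ℕ)) (hkt : k ≤ (t : ℕ)) :
    tailTerm (v := v) (jointP ch (graft src T rep hk)) k t hkt ρ
      = (prE (jointP ch src) (PE k ρ) / prE (jointP ch src) (PE k (rep ρ))) *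
          tailTerm (v := v) (jointP ch src) k t hkt (rep ρ) := by
  unfold tailTerm
  rw [Finset.mul_sum]
  refine Finset.sum_congr rfl fun a _ => ?_
  rw [Finset.mul_sum]
  refine Finset.sum_congr rfl fun b _ => ?_
  rw [Finset.mul_sum]
  -- reindex the `c`-sum via splicing
  simp only [mul_ite, mul_zero]
  rw [← Finset.sum_filter, ← Finset.sum_filter]
  refine Finset.sum_nbij' (fun c => spliceC k (rep ρ) c) (fun c => spliceC k ρ c)
    ?_ ?_ ?_ ?_ ?_
  · intro c hcmem
    rw [Finset.mem_filter]
    exact ⟨Finset.mem_univ _, restrC_spliceC k hkt (rep ρ) c⟩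
  · intro c hcmem
    rw [Finset.mem_filter]
    exact ⟨Finset.mem_univ _, restrC_spliceC k hkt ρ c⟩
  · intro c hcmem
    rw [Finset.mem_filter] at hcmem
    exact spliceC_spliceC k hcmem.2 (rep ρ)
  · intro c hcmem
    rw [Finset.mem_filter] at hcmem
    exact spliceC_spliceC k hcmem.2 ρ
  · intro c hcmem
    rw [Finset.mem_filter] at hcmem
    exact smd_transfer ch huv hk hTN src hM rep ρ hpos hpos' halpha t hTt a b c hcmem.2

end Bucket

section StageObj

variable {N u v : ℕ}

omit [Fintype X] [Fintype S] [Fintype Y] in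
lemma CylE.inter {T : ℕ} {E F : Set (Traj X S Y N)} (hE : CylE T E) (hF : CylE T F) :
    CylE T (E ∩ F) := by
  intro ω ω' hx hs hy
  rw [Set.mem_inter_iff, Set.mem_inter_iff, hE ω ω' hx hs hy, hF ω ω' hx hs hy]

omit [Fintype X] [Fintype S] [Fintype Y] in
lemma cylE_A {T : ℕ} (t : Fin N) (ht : (t : ℕ) < T)
    (a : ({j : Fin N // (t : ℕ) ≤ (j : ℕ) + v ∧ (j : ℕ) ≤ (t : ℕ)} → X) ×
      ({j : Fin (N + 1) // (j : ℕ) + v = (t : ℕ)} → S)) :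
    CylE (Y := Y) T {ω | fAt v t ω = a} := by
  intro ω ω' hx hs hy
  simp only [Set.mem_setOf_eq]
  unfold fAt
  rw [Prod.ext_iff, Prod.ext_iff, funext_iff, funext_iff, funext_iff, funext_iff]
  constructor <;> rintro ⟨h1, h2⟩ <;> refine ⟨fun j => ?_, fun j => ?_⟩ <;> dsimp only
  · rw [← hx j.1 (by omega)]; exact h1 j
  · rw [← hs j.1 (by omega)]; exact h2 j
  · rw [hx j.1 (by omega)]; exact h1 j
  · rw [hs j.1 (by omega)]; exact h2 j

omit [Fintype X] [Fintype S] [Fintype Y] in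
lemma cylE_B {T : ℕ} (t : Fin N) (ht : (t : ℕ) < T) (b : Y) :
    CylE (X := X) (S := S) T {ω | fBt t ω = b} := by
  intro ω ω' hx hs hy
  simp only [Set.mem_setOf_eq]
  unfold fBt
  rw [hy t ht]

omit [Fintype X] [Fintype S] [Fintype Y] in
lemma cylE_C {T : ℕ} (t : Fin N) (ht : (t : ℕ) < T)
    (c : {j : Fin N // (j : ℕ) < (t : ℕ)} → Y) :
    CylE (X := X) (S := S) T {ω | fCt t ω = c} := by
  intro ω ω' hx hs hy
  simp only [Set.mem_setOf_eq]
  unfold fCt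
  rw [funext_iff, funext_iff]
  constructor <;> intro h j
  · rw [← hy j.1 (by omega)]; exact h j
  · rw [hy j.1 (by omega)]; exact h j

omit [Fintype X] [Fintype S] [Fintype Y] in
lemma EABC_eq' {t : Fin N}
    (a : ({j : Fin N // (t : ℕ) ≤ (j : ℕ) + v ∧ (j : ℕ) ≤ (t : ℕ)} → X) ×
      ({j : Fin (N + 1) // (j : ℕ) + v = (t : ℕ)} → S))
    (b : Y) (c : {j : Fin N // (j : ℕ) < (t : ℕ)} → Y) :
    {ω : Traj X S Y N | fAt v t ω = a ∧ fBt t ω = b ∧ fCt t ω = c}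
      = {ω | fAt v t ω = a} ∩ ({ω | fBt t ω = b} ∩ {ω | fCt t ω = c}) := by
  ext ω
  simp only [Set.mem_setOf_eq, Set.mem_inter_iff]

open Classical in
lemma condMI_early [Nonempty X] (ch : NCFSC X S Y) {T : ℕ} (hTN : T ≤ N)
    (src src' : Source X S Y N u)
    (hpol : ∀ i : Fin N, (i : ℕ) < T → src'.pol i = src.pol i)
    (t : Fin N) (ht : (t : ℕ) < T) :
    condMI (jointP ch src') (fAt v t) (fBt t) (fCt t)
      = condMI (jointP ch src) (fAt v t) (fBt t) (fCt t) := by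
  rw [condMI_eq_sum_smd, condMI_eq_sum_smd]
  refine Finset.sum_congr rfl fun a _ => Finset.sum_congr rfl fun b _ =>
    Finset.sum_congr rfl fun c _ => ?_
  have hprE : ∀ E : Set (Traj X S Y N), CylE T E →
      prE (jointP ch src') E = prE (jointP ch src) E :=
    fun E hE => prE_jointP_agree ch src' src T hTN hpol E hE
  have cA := cylE_A (X := X) (S := S) (Y := Y) (v := v) t ht a
  have cB := cylE_B (X := X) (S := S) t ht b
  have cC := cylE_C (X := X) (S := S) t ht c
  unfold smd condPr
  rw [EABC_eq', EAB_eq]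
  rw [hprE _ (cA.inter (cB.inter cC)), hprE _ ((cA.inter cB).inter cC),
    hprE _ (cA.inter cC), hprE _ (cB.inter cC), hprE _ cC]

open Classical in
/-- Aggregated tail value of a prefix. -/
def Gval (ch : NCFSC X S Y) (k T : ℕ) (hkT : k ≤ T) (src : Source X S Y N u)
    (σ : {j : Fin N // (j : ℕ) < k} → Y) : ℝ :=
  ∑ t : Fin N, if h : T ≤ (t : ℕ) then
    tailTerm (v := v) (jointP ch src) k t (by omega) σ else 0

open Classical in
lemma stage_obj_le [Nonempty X] (ch : NCFSC X S Y) {k T : ℕ} (huv : u ≤ v)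
    (hk : k + u = T) (hkT : k ≤ T) (hTN : T ≤ N)
    (src : Source X S Y N u) (hM : IsMarkov v src)
    (rep : ({j : Fin N // (j : ℕ) < k} → Y) → ({j : Fin N // (j : ℕ) < k} → Y))
    (hrep1 : ∀ ρ, 0 < prE (jointP ch src) (PE k ρ) →
      0 < prE (jointP ch src) (PE k (rep ρ)))
    (hrep2 : ∀ ρ, 0 < prE (jointP ch src) (PE k ρ) → ∀ w,
        prE (jointP ch src) (PE k ρ ∩ {ω | winMap u v T ω = w}) *
            prE (jointP ch src) (PE k (rep ρ))
          = prE (jointP ch src) (PE k (rep ρ) ∩ {ω | winMap u v T ω = w}) *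
            prE (jointP ch src) (PE k ρ))
    (hrep3 : ∀ ρ, 0 < prE (jointP ch src) (PE k ρ) →
        Gval (v := v) ch k T hkT src ρ / prE (jointP ch src) (PE k ρ)
          ≤ Gval (v := v) ch k T hkT src (rep ρ) / prE (jointP ch src) (PE k (rep ρ))) :
    objWin v ch src ≤ objWin v ch (graft src T rep hk) := by
  have hsplit : ∀ s : Source X S Y N u, objWin v ch s
      = (∑ t : Fin N, if T ≤ (t : ℕ) then
            condMI (jointP ch s) (fAt v t) (fBt t) (fCt t) else 0)
        + ∑ t : Fin N, if T ≤ (t : ℕ) then 0 else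
            condMI (jointP ch s) (fAt v t) (fBt t) (fCt t) := by
    intro s
    rw [objWin_eq, ← Finset.sum_add_distrib]
    refine Finset.sum_congr rfl fun t _ => ?_
    by_cases h : T ≤ (t : ℕ) <;> simp [h]
  rw [hsplit src, hsplit (graft src T rep hk)]
  have hearly : (∑ t : Fin N, if T ≤ (t : ℕ) then 0 else
        condMI (jointP ch (graft src T rep hk)) (fAt v t) (fBt t) (fCt t))
      = ∑ t : Fin N, if T ≤ (t : ℕ) then 0 else
          condMI (jointP ch src) (fAt v t) (fBt t) (fCt t) := by
    refine Finset.sum_congr rfl fun t _ => ?_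
    by_cases h : T ≤ (t : ℕ)
    · rw [if_pos h, if_pos h]
    · rw [if_neg h, if_neg h,
        condMI_early ch hTN src (graft src T rep hk)
          (fun i hi => graft_pol_lt src T rep hk i hi) t (by omega)]
  rw [hearly]
  have htail : (∑ t : Fin N, if T ≤ (t : ℕ) then
        condMI (jointP ch src) (fAt v t) (fBt t) (fCt t) else 0)
      ≤ ∑ t : Fin N, if T ≤ (t : ℕ) then
          condMI (jointP ch (graft src T rep hk)) (fAt v t) (fBt t) (fCt t) else 0 := by
    have hL : (∑ t : Fin N, if T ≤ (t : ℕ) then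
          condMI (jointP ch (graft src T rep hk)) (fAt v t) (fBt t) (fCt t) else 0)
        = ∑ ρ : {j : Fin N // (j : ℕ) < k} → Y,
            (if 0 < prE (jointP ch src) (PE k ρ) then
              (prE (jointP ch src) (PE k ρ) / prE (jointP ch src) (PE k (rep ρ))) *
                Gval (v := v) ch k T hkT src (rep ρ) else 0) := by
      calc (∑ t : Fin N, if T ≤ (t : ℕ) then
            condMI (jointP ch (graft src T rep hk)) (fAt v t) (fBt t) (fCt t) else 0)
          = ∑ t : Fin N, ∑ ρ : {j : Fin N // (j : ℕ) < k} → Y,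
              (if h : T ≤ (t : ℕ) then
                tailTerm (v := v) (jointP ch (graft src T rep hk)) k t (by omega) ρ
              else 0) := by
            refine Finset.sum_congr rfl fun t _ => ?_
            by_cases h : T ≤ (t : ℕ)
            · rw [if_pos h, condMI_group (jointP ch (graft src T rep hk)) k t (by omega)]
              refine Finset.sum_congr rfl fun ρ _ => ?_
              rw [dif_pos h]
            · rw [if_neg h]
              exact (Finset.sum_eq_zero fun ρ _ => dif_neg h).symm
        _ = ∑ ρ : {j : Fin N // (j : ℕ) < k} → Y, ∑ t : Fin N,
              (if h : T ≤ (t : ℕ) then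
                tailTerm (v := v) (jointP ch (graft src T rep hk)) k t (by omega) ρ
              else 0) := Finset.sum_comm
        _ = ∑ ρ : {j : Fin N // (j : ℕ) < k} → Y,
              (if 0 < prE (jointP ch src) (PE k ρ) then
                (prE (jointP ch src) (PE k ρ) / prE (jointP ch src) (PE k (rep ρ))) *
                  Gval (v := v) ch k T hkT src (rep ρ) else 0) := by
            refine Finset.sum_congr rfl fun ρ _ => ?_
            by_cases hpos : 0 < prE (jointP ch src) (PE k ρ)
            · rw [if_pos hpos]
              have hstep : ∀ t : Fin N, (if h : T ≤ (t : ℕ) then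
                    tailTerm (v := v) (jointP ch (graft src T rep hk)) k t (by omega) ρ
                  else 0)
                  = (prE (jointP ch src) (PE k ρ) / prE (jointP ch src) (PE k (rep ρ))) *
                    (if h : T ≤ (t : ℕ) then
                      tailTerm (v := v) (jointP ch src) k t (by omega) (rep ρ) else 0) := by
                intro t
                by_cases h : T ≤ (t : ℕ)
                · rw [dif_pos h, dif_pos h,
                    tailTerm_graft ch huv hk hTN src hM rep ρ hpos (hrep1 ρ hpos)
                      (hrep2 ρ hpos) t h (by omega)]
                · rw [dif_neg h, dif_neg h, mul_zero]
              rw [Finset.sum_congr rfl (fun t _ => hstep t), ← Finset.mul_sum]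
              rfl
            · rw [if_neg hpos]
              refine Finset.sum_eq_zero fun t _ => ?_
              by_cases h : T ≤ (t : ℕ)
              · rw [dif_pos h]
                refine tailTerm_zero ch (graft src T rep hk) src k t (by omega) ρ ?_ ?_
                · exact le_antisymm (not_lt.mp hpos) (prE_nonneg (jointP_nonneg ch _) _)
                · exact graft_PE_eq (v := v) ch hk hTN src rep ρ
              · rw [dif_neg h]
    have hR : (∑ t : Fin N, if T ≤ (t : ℕ) then
          condMI (jointP ch src) (fAt v t) (fBt t) (fCt t) else 0)
        = ∑ ρ : {j : Fin N // (j : ℕ) < k} → Y, Gval (v := v) ch k T hkT src ρ := by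
      calc (∑ t : Fin N, if T ≤ (t : ℕ) then
            condMI (jointP ch src) (fAt v t) (fBt t) (fCt t) else 0)
          = ∑ t : Fin N, ∑ ρ : {j : Fin N // (j : ℕ) < k} → Y,
              (if h : T ≤ (t : ℕ) then
                tailTerm (v := v) (jointP ch src) k t (by omega) ρ else 0) := by
            refine Finset.sum_congr rfl fun t _ => ?_
            by_cases h : T ≤ (t : ℕ)
            · rw [if_pos h, condMI_group (jointP ch src) k t (by omega)]
              refine Finset.sum_congr rfl fun ρ _ => ?_
              rw [dif_pos h]
            · rw [if_neg h]
              exact (Finset.sum_eq_zero fun ρ _ => dif_neg h).symm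
        _ = ∑ ρ : {j : Fin N // (j : ℕ) < k} → Y, ∑ t : Fin N,
              (if h : T ≤ (t : ℕ) then
                tailTerm (v := v) (jointP ch src) k t (by omega) ρ else 0) :=
            Finset.sum_comm
        _ = ∑ ρ : {j : Fin N // (j : ℕ) < k} → Y, Gval (v := v) ch k T hkT src ρ := rfl
    rw [hL, hR]
    refine Finset.sum_le_sum fun ρ _ => ?_
    by_cases hpos : 0 < prE (jointP ch src) (PE k ρ)
    · rw [if_pos hpos]
      have h3 := hrep3 ρ hpos
      have h1 := hrep1 ρ hpos
      have hmul := mul_le_mul_of_nonneg_left h3 (le_of_lt hpos)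
      have e1 : prE (jointP ch src) (PE k ρ) *
          (Gval (v := v) ch k T hkT src ρ / prE (jointP ch src) (PE k ρ))
          = Gval (v := v) ch k T hkT src ρ := by
        field_simp
      have e2 : prE (jointP ch src) (PE k ρ) *
          (Gval (v := v) ch k T hkT src (rep ρ) / prE (jointP ch src) (PE k (rep ρ)))
          = (prE (jointP ch src) (PE k ρ) / prE (jointP ch src) (PE k (rep ρ))) *
            Gval (v := v) ch k T hkT src (rep ρ) := by
        ring
      rw [e1, e2] at hmul
      exact hmul
    · rw [if_neg hpos]
      have hzero : Gval (v := v) ch k T hkT src ρ = 0 := by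
        unfold Gval
        refine Finset.sum_eq_zero fun t _ => ?_
        by_cases h : T ≤ (t : ℕ)
        · rw [dif_pos h]
          refine tailTerm_zero ch src src k t (by omega) ρ ?_ rfl
          exact le_antisymm (not_lt.mp hpos) (prE_nonneg (jointP_nonneg ch _) _)
        · rw [dif_neg h]
      rw [hzero]
  linarith [htail]

end StageObj

section APsec

variable {N u v : ℕ}

/-- The body of `AlphaPolicy` at a single time `t`. -/
def APbody (ch : NCFSC X S Y) (src : Source X S Y N u) (t : Fin N) : Prop :=
  ∀ yh yh' : Fin N → Y,
    0 < prE (jointP ch src)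
        {ω : Traj X S Y N | ∀ j : Fin N, (j : ℕ) + u + 1 ≤ (t : ℕ) → ω.2.2 j = yh j} →
    0 < prE (jointP ch src)
        {ω : Traj X S Y N | ∀ j : Fin N, (j : ℕ) + u + 1 ≤ (t : ℕ) → ω.2.2 j = yh' j} →
    alphaWinEq v ch src t yh yh' →
    ∀ (xf : Fin N → X) (sf : Fin (N + 1) → S) (a : X),
      src.pol t xf sf yh a = src.pol t xf sf yh' a

lemma alphaPolicy_iff (ch : NCFSC X S Y) (src : Source X S Y N u) :
    AlphaPolicy v ch src ↔ ∀ t : Fin N, APbody (v := v) ch src t := Iff.rfl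

lemma APbody_trivial (ch : NCFSC X S Y) (src : Source X S Y N u) (t : Fin N)
    (htu : (t : ℕ) ≤ u) : APbody (v := v) ch src t := by
  intro yh yh' _ _ _ xf sf a
  have := src.causal t xf xf sf sf yh yh' (fun j _ => rfl) (fun j _ => rfl)
    (fun j hj => absurd hj (by omega))
  rw [this]

open Classical in
lemma APbody_preserved [Nonempty X] (ch : NCFSC X S Y) {T' : ℕ} (hT'N : T' ≤ N)
    (src src' : Source X S Y N u)
    (hpol : ∀ i : Fin N, (i : ℕ) < T' → src'.pol i = src.pol i)
    (t : Fin N) (ht : (t : ℕ) < T') (hAP : APbody (v := v) ch src t) :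
    APbody (v := v) ch src' t := by
  intro yh yh' h1 h2 heq xf sf a
  have hprE : ∀ E : Set (Traj X S Y N), CylE T' E →
      prE (jointP ch src') E = prE (jointP ch src) E :=
    fun E hE => prE_jointP_agree ch src' src T' hT'N hpol E hE
  have cylES : ∀ z : Fin N → Y, CylE (X := X) (S := S) T'
      {ω : Traj X S Y N | ∀ j : Fin N, (j : ℕ) + u + 1 ≤ (t : ℕ) → ω.2.2 j = z j} := by
    intro z ω ω' hx hs hy
    simp only [Set.mem_setOf_eq]
    constructor <;> intro h j hj
    · rw [← hy j (by omega)]; exact h j hj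
    · rw [hy j (by omega)]; exact h j hj
  have cylW : ∀ (xf0 : Fin N → X) (sf0 : Fin (N+1) → S), CylE (Y := Y) T'
      {ω : Traj X S Y N |
        (∀ j : Fin N, (t : ℕ) ≤ (j : ℕ) + v ∧ (j : ℕ) < (t : ℕ) → ω.1 j = xf0 j) ∧
          ∀ j : Fin (N + 1), (t : ℕ) ≤ (j : ℕ) + v ∧ (j : ℕ) + u ≤ (t : ℕ) →
            ω.2.1 j = sf0 j} := by
    intro xf0 sf0 ω ω' hx hs hy
    simp only [Set.mem_setOf_eq]
    constructor <;> rintro ⟨hA, hB⟩ <;> refine ⟨fun j hj => ?_, fun j hj => ?_⟩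
    · rw [← hx j (by omega)]; exact hA j hj
    · rw [← hs j (by omega)]; exact hB j hj
    · rw [hx j (by omega)]; exact hA j hj
    · rw [hs j (by omega)]; exact hB j hj
  rw [hprE _ (cylES yh)] at h1
  rw [hprE _ (cylES yh')] at h2
  have heq' : alphaWinEq v ch src t yh yh' := by
    intro xf0 sf0
    have h := heq xf0 sf0
    unfold condPr at h ⊢
    rw [hprE _ ((cylW xf0 sf0).inter (cylES yh)), hprE _ (cylES yh),
      hprE _ ((cylW xf0 sf0).inter (cylES yh')), hprE _ (cylES yh')] at h
    exact h
  have := hAP yh yh' h1 h2 heq' xf sf a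
  rw [hpol t ht, this]

open Classical in
lemma rep_exists [Nonempty X] (ch : NCFSC X S Y) {k T : ℕ} (hkT : k ≤ T)
    (src : Source X S Y N u) :
    ∃ rep : ({j : Fin N // (j : ℕ) < k} → Y) → ({j : Fin N // (j : ℕ) < k} → Y),
      (∀ ρ, 0 < prE (jointP ch src) (PE k ρ) →
        0 < prE (jointP ch src) (PE k (rep ρ)) ∧
        (∀ w, condPr (jointP ch src) {ω | winMap u v T ω = w} (PE k ρ)
            = condPr (jointP ch src) {ω | winMap u v T ω = w} (PE k (rep ρ))) ∧
        Gval (v := v) ch k T hkT src ρ / prE (jointP ch src) (PE k ρ)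
          ≤ Gval (v := v) ch k T hkT src (rep ρ) /
              prE (jointP ch src) (PE k (rep ρ))) ∧
      (∀ ρ σ, 0 < prE (jointP ch src) (PE k ρ) → 0 < prE (jointP ch src) (PE k σ) →
        (∀ w, condPr (jointP ch src) {ω | winMap u v T ω = w} (PE k ρ)
            = condPr (jointP ch src) {ω | winMap u v T ω = w} (PE k σ)) →
        rep ρ = rep σ) := by
  have hY : Nonempty Y := nonempty_Y_of_ch ch (Classical.arbitrary X)
  set p := jointP ch src with hp
  set gf : ({j : Fin N // (j : ℕ) < k} → Y) → ℝ :=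
    fun σ => Gval (v := v) ch k T hkT src σ / prE p (PE k σ) with hgf
  set cls : ({j : Fin N // (j : ℕ) < k} → Y) → Finset ({j : Fin N // (j : ℕ) < k} → Y) :=
    fun ρ => Finset.univ.filter (fun σ => 0 < prE p (PE k σ) ∧
      ∀ w, condPr p {ω | winMap u v T ω = w} (PE k ρ)
        = condPr p {ω | winMap u v T ω = w} (PE k σ)) with hcls
  set pick : Finset ({j : Fin N // (j : ℕ) < k} → Y) → ({j : Fin N // (j : ℕ) < k} → Y) :=
    fun s => if h : ∃ σ ∈ s, ∀ σ' ∈ s, gf σ' ≤ gf σ then h.choose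
      else Classical.arbitrary _ with hpick
  refine ⟨fun ρ => pick (cls ρ), ?_, ?_⟩
  · intro ρ hpos
    dsimp only
    have hmem : ρ ∈ cls ρ := by
      rw [hcls]
      simp only [Finset.mem_filter, Finset.mem_univ, true_and]
      exact ⟨hpos, fun _ => trivial⟩
    have hex : ∃ σ ∈ cls ρ, ∀ σ' ∈ cls ρ, gf σ' ≤ gf σ :=
      Finset.exists_max_image (cls ρ) gf ⟨ρ, hmem⟩
    have hpk : pick (cls ρ) = hex.choose := by
      rw [hpick]
      exact dif_pos hex
    have hspec := hex.choose_spec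
    have hmemc := (Finset.mem_filter.mp hspec.1).2
    refine ⟨?_, ?_, ?_⟩
    · rw [hpk]; exact hmemc.1
    · rw [hpk]; exact hmemc.2
    · have := hspec.2 ρ hmem
      rw [hpk]
      exact this
  · intro ρ σ hρ hσ hR
    dsimp only
    have hclseq : cls ρ = cls σ := by
      rw [hcls]
      ext τ
      simp only [Finset.mem_filter, Finset.mem_univ, true_and]
      constructor <;> rintro ⟨h1, h2⟩ <;> refine ⟨h1, fun w => ?_⟩
      · rw [← hR w]; exact h2 w
      · rw [hR w]; exact h2 w
    rw [hclseq]

open Classical in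
lemma stage_exists [Nonempty X] (ch : NCFSC X S Y) (huv : u ≤ v) {T : ℕ}
    (huT : u < T) (hTN : T ≤ N) (src : Source X S Y N u) (hM : IsMarkov v src) :
    ∃ src' : Source X S Y N u, IsMarkov v src' ∧
      (∀ i : Fin N, (i : ℕ) < T → src'.pol i = src.pol i) ∧
      objWin v ch src ≤ objWin v ch src' ∧
      ∀ t : Fin N, (t : ℕ) = T → APbody (v := v) ch src' t := by
  have hk : (T - u) + u = T := by omega
  set k := T - u with hkdef
  have hkT : k ≤ T := by omega
  obtain ⟨rep, hrepPos, hrepWD⟩ := rep_exists (v := v) ch hkT src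
  have hcross : ∀ ρ, 0 < prE (jointP ch src) (PE k ρ) → ∀ w,
      prE (jointP ch src) (PE k ρ ∩ {ω | winMap u v T ω = w}) *
          prE (jointP ch src) (PE k (rep ρ))
        = prE (jointP ch src) (PE k (rep ρ) ∩ {ω | winMap u v T ω = w}) *
          prE (jointP ch src) (PE k ρ) := by
    intro ρ hpos w
    obtain ⟨hpos', hcond, -⟩ := hrepPos ρ hpos
    have h := hcond w
    unfold condPr at h
    have h2 := (div_eq_div_iff (ne_of_gt hpos) (ne_of_gt hpos')).mp h
    rw [Set.inter_comm (PE k ρ), Set.inter_comm (PE k (rep ρ))]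
    exact h2
  have cylPE : ∀ ρ : {j : Fin N // (j : ℕ) < k} → Y, CylE (X := X) (S := S) T (PE k ρ) := by
    intro ρ ω ω' hx hs hy
    constructor <;> intro h j
    · rw [← hy j.1 (by omega)]; exact h j
    · rw [hy j.1 (by omega)]; exact h j
  have cylWin : ∀ w, CylE T {ω : Traj X S Y N | winMap u v T ω = w} := by
    intro w ω ω' hx hs hy
    simp only [Set.mem_setOf_eq]
    rw [winMap_eq_iff, winMap_eq_iff]
    constructor <;> rintro ⟨hA, hB⟩ <;> refine ⟨fun j => ?_, fun j => ?_⟩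
    · rw [← hx j.1 (by omega)]; exact hA j
    · rw [← hs j.1 (by omega)]; exact hB j
    · rw [hx j.1 (by omega)]; exact hA j
    · rw [hs j.1 (by omega)]; exact hB j
  refine ⟨graft src T rep hk, graft_markov src T rep hk hM,
    fun i hi => graft_pol_lt src T rep hk i hi, ?_, ?_⟩
  · exact stage_obj_le ch huv hk hkT hTN src hM rep (fun ρ h => (hrepPos ρ h).1)
      hcross (fun ρ h => (hrepPos ρ h).2.2)
  · intro t ht yh yh' h1 h2 heq xf sf a
    have hTt : T ≤ (t : ℕ) := by omega
    have hES : ∀ z : Fin N → Y,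
        {ω : Traj X S Y N | ∀ j : Fin N, (j : ℕ) + u + 1 ≤ (t : ℕ) → ω.2.2 j = z j}
          = PE k (fun i => z i.1) := by
      intro z
      ext ω
      simp only [Set.mem_setOf_eq]
      constructor
      · intro h j
        exact h j.1 (by omega)
      · intro h j hj
        exact h ⟨j, by omega⟩
    rw [hES yh] at h1
    rw [hES yh'] at h2
    rw [graft_PE_eq (v := v) ch hk hTN src rep _] at h1 h2
    have hprE : ∀ E : Set (Traj X S Y N), CylE T E →
        prE (jointP ch (graft src T rep hk)) E = prE (jointP ch src) E :=
      fun E hE => prE_jointP_agree ch _ _ T hTN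
        (fun i hi => graft_pol_lt src T rep hk i hi) E hE
    have hReq : ∀ w, condPr (jointP ch src) {ω | winMap u v T ω = w}
          (PE k (fun i => yh i.1))
        = condPr (jointP ch src) {ω | winMap u v T ω = w} (PE k (fun i => yh' i.1)) := by
      intro w
      have hS : Nonempty S := nonempty_S_of_ch ch
      set xf0 : Fin N → X := fun j =>
        if h : T ≤ (j : ℕ) + v ∧ (j : ℕ) < T then w.1 ⟨j, h⟩ else Classical.arbitrary X
        with hxf0
      set sf0 : Fin (N+1) → S := fun j =>
        if h : T ≤ (j : ℕ) + v ∧ (j : ℕ) + u ≤ T then w.2 ⟨j, h⟩ else Classical.arbitrary S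
        with hsf0
      have hWset : {ω : Traj X S Y N |
          (∀ j : Fin N, (t : ℕ) ≤ (j : ℕ) + v ∧ (j : ℕ) < (t : ℕ) → ω.1 j = xf0 j) ∧
            ∀ j : Fin (N + 1), (t : ℕ) ≤ (j : ℕ) + v ∧ (j : ℕ) + u ≤ (t : ℕ) →
              ω.2.1 j = sf0 j}
          = {ω | winMap u v T ω = w} := by
        ext ω
        simp only [Set.mem_setOf_eq]
        rw [winMap_eq_iff]
        constructor
        · rintro ⟨hA, hB⟩
          refine ⟨fun j => ?_, fun j => ?_⟩
          · rw [hA j.1 (by omega)]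
            rw [hxf0]
            dsimp only
            rw [dif_pos j.2]
          · rw [hB j.1 (by omega)]
            rw [hsf0]
            dsimp only
            rw [dif_pos j.2]
        · rintro ⟨hA, hB⟩
          refine ⟨fun j hj => ?_, fun j hj => ?_⟩
          · have h' : T ≤ (j : ℕ) + v ∧ (j : ℕ) < T := by omega
            rw [hA ⟨j, h'⟩, hxf0]
            dsimp only
            rw [dif_pos h']
          · have h' : T ≤ (j : ℕ) + v ∧ (j : ℕ) + u ≤ T := by omega
            rw [hB ⟨j, h'⟩, hsf0]
            dsimp only
            rw [dif_pos h']
      have heqw := heq xf0 sf0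
      rw [hWset, hES yh, hES yh'] at heqw
      unfold condPr at heqw ⊢
      rw [hprE _ ((cylWin w).inter (cylPE _)), hprE _ (cylPE _),
        hprE _ ((cylWin w).inter (cylPE _)), hprE _ (cylPE _)] at heqw
      exact heqw
    have hrepeq : rep (fun i => yh i.1) = rep (fun i => yh' i.1) :=
      hrepWD _ _ h1 h2 hReq
    rw [graft_pol_ge src T rep hk t hTt, graft_pol_ge src T rep hk t hTt]
    have hcz : src.pol t xf sf (Mmap k rep yh) = src.pol t xf sf (Mmap k rep yh') := by
      refine src.causal t xf xf sf sf _ _ (fun j _ => rfl) (fun j _ => rfl) ?_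
      intro j hj
      have hjk : (j : ℕ) < k := by omega
      unfold Mmap
      rw [dif_pos hjk, dif_pos hjk, hrepeq]
    rw [hcz]

end APsec

section MainProof

variable {N u v : ℕ}

open Classical in
lemma improve [Nonempty X] (ch : NCFSC X S Y) (huv : u ≤ v) :
    ∀ m : ℕ, m ≤ N → ∀ src : Source X S Y N u, IsMarkov v src →
      ∃ src' : Source X S Y N u, IsMarkov v src' ∧
        objWin v ch src ≤ objWin v ch src' ∧
        ∀ t : Fin N, (t : ℕ) < m → APbody (v := v) ch src' t := by
  intro m
  induction m with
  | zero => exact fun _ src hM => ⟨src, hM, le_rfl, fun t ht => absurd ht (by omega)⟩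
  | succ m ih =>
    intro hmN src hM
    obtain ⟨src1, hM1, hle1, hAP1⟩ := ih (by omega) src hM
    by_cases hmu : m ≤ u
    · refine ⟨src1, hM1, hle1, fun t ht => ?_⟩
      by_cases h : (t : ℕ) < m
      · exact hAP1 t h
      · exact APbody_trivial ch src1 t (by omega)
    · obtain ⟨src2, hM2, hagree2, hle2, hAPT⟩ :=
        stage_exists (v := v) ch huv (T := m) (by omega) (by omega) src1 hM1
      refine ⟨src2, hM2, le_trans hle1 hle2, fun t ht => ?_⟩
      by_cases h : (t : ℕ) < m
      · exact APbody_preserved ch (by omega : m ≤ N) src1 src2 hagree2 t h (hAP1 t h)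
      · exact hAPT t (by omega)

end MainProof

/-- **Theorem 3, finite-horizon supremum form.** For a
non-controllable FSC and `0 ≤ u ≤ v`, the supremum of
`Σ_{t=1}^N I(X_{t-v}^t, S_{t-v-1}; Y_t | Y^{t-1})` over `v`-th order
conditional Markov sources is attained within the subclass `𝒫'_v(u,u)` of
sources whose policies depend on the output history only through the a
posteriori vector. -/
theorem statement15 {X S Y : Type} [Fintype X] [Fintype S] [Fintype Y] {N : ℕ}
    (ch : NCFSC X S Y) (u v : ℕ) (huv : u ≤ v) :
    (⨆ src : {P : Source X S Y N u // IsMarkov v P}, objWin v ch src.1) =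
      ⨆ src : {P : Source X S Y N u // IsMarkov v P ∧ AlphaPolicy v ch P},
        objWin v ch src.1 := by
  classical
  by_cases hX : Nonempty X
  · haveI := hX
    show sSup (Set.range fun src : {P : Source X S Y N u // IsMarkov v P} =>
        objWin v ch src.1)
      = sSup (Set.range fun src :
          {P : Source X S Y N u // IsMarkov v P ∧ AlphaPolicy v ch P} =>
        objWin v ch src.1)
    refine csSup_eq_csSup_of_forall_exists_le ?_ ?_
    · rintro x ⟨src, rfl⟩
      obtain ⟨src', hM', hle, hAP⟩ := improve (v := v) ch huv N le_rfl src.1 src.2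
      refine ⟨objWin v ch src', ⟨⟨src', hM', ?_⟩, rfl⟩, hle⟩
      exact (alphaPolicy_iff ch src').mpr fun t => hAP t t.isLt
    · rintro y ⟨src, rfl⟩
      exact ⟨objWin v ch src.1, ⟨⟨src.1, src.2.1⟩, rfl⟩, le_rfl⟩
  · haveI hXe : IsEmpty X := not_nonempty_iff.mp hX
    rcases Nat.eq_zero_or_pos N with hN | hN
    · subst hN
      have src0 : Source X S Y 0 u :=
        ⟨fun t => t.elim0, fun t => t.elim0, fun t => t.elim0, fun t => t.elim0⟩
      have hobj : ∀ src : Source X S Y 0 u, objWin v ch src = 0 := by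
        intro src
        unfold objWin
        simp
      have hM0 : IsMarkov v src0 := fun t => t.elim0
      have hA0 : AlphaPolicy v ch src0 := fun t => t.elim0
      haveI h1 : Nonempty {P : Source X S Y 0 u // IsMarkov v P} := ⟨⟨src0, hM0⟩⟩
      haveI h2 : Nonempty {P : Source X S Y 0 u // IsMarkov v P ∧ AlphaPolicy v ch P} :=
        ⟨⟨src0, hM0, hA0⟩⟩
      calc (⨆ src : {P : Source X S Y 0 u // IsMarkov v P}, objWin v ch src.1)
          = ⨆ _ : {P : Source X S Y 0 u // IsMarkov v P}, (0 : ℝ) := by simp only [hobj]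
        _ = (0 : ℝ) := ciSup_const
        _ = ⨆ _ : {P : Source X S Y 0 u // IsMarkov v P ∧ AlphaPolicy v ch P}, (0 : ℝ) :=
            ciSup_const.symm
        _ = ⨆ src : {P : Source X S Y 0 u // IsMarkov v P ∧ AlphaPolicy v ch P},
              objWin v ch src.1 := by simp only [hobj]
    · haveI hTe : IsEmpty (Traj X S Y N) := ⟨fun ω => isEmptyElim (ω.1 ⟨0, hN⟩)⟩
      have src0 : Source X S Y N u :=
        ⟨fun t x s y a => isEmptyElim a,
         fun t x s y a => isEmptyElim a,
         fun t x s y => isEmptyElim (x ⟨0, hN⟩),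
         fun t x x' s s' y y' _ _ _ => isEmptyElim (x ⟨0, hN⟩)⟩
      have hobj : ∀ src : Source X S Y N u, objWin v ch src = 0 := by
        intro src
        unfold objWin condMI prE
        simp
      have hM0 : IsMarkov v src0 := fun t x x' s s' y y' _ _ _ => isEmptyElim (x ⟨0, hN⟩)
      have hA0 : AlphaPolicy v ch src0 := fun t yh yh' _ _ _ xf sf a => isEmptyElim a
      haveI h1 : Nonempty {P : Source X S Y N u // IsMarkov v P} := ⟨⟨src0, hM0⟩⟩
      haveI h2 : Nonempty {P : Source X S Y N u // IsMarkov v P ∧ AlphaPolicy v ch P} :=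
        ⟨⟨src0, hM0, hA0⟩⟩
      calc (⨆ src : {P : Source X S Y N u // IsMarkov v P}, objWin v ch src.1)
          = ⨆ _ : {P : Source X S Y N u // IsMarkov v P}, (0 : ℝ) := by simp only [hobj]
        _ = (0 : ℝ) := ciSup_const
        _ = ⨆ _ : {P : Source X S Y N u // IsMarkov v P ∧ AlphaPolicy v ch P}, (0 : ℝ) :=
            ciSup_const.symm
        _ = ⨆ src : {P : Source X S Y N u // IsMarkov v P ∧ AlphaPolicy v ch P},
              objWin v ch src.1 := by simp only [hobj]

end FSCPaper
end
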